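/- arXiv:2008.04097 — 9 statements merged into one kernel-verified Lean document; each statement's English description precedes it below -/
import Mathlib

section
/- For every odd positive integer n, the finite sum ∑_{j=1}^{n} (-1)^{j-1} / sin(π(2j-1)/(2n)) equals n. -/
open Real Finset

lemma aux_sin_odd_mul (θ : ℝ) (m : ℕ) :
    Real.sin ((2 * (m : ℝ) + 1) * θ) =
      Real.sin θ + ∑ l ∈ Finset.range m, 2 * Real.sin θ * Real.cos ((2 * ((l : ℝ) + 1)) * θ) := by
  induction m with
  | zero => simp
  | succ m ih =>
    rw [Finset.sum_range_succ, ← add_assoc, ← ih]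
    have h1 : (2 * ((m : ℝ) + 1) + 1) * θ = (2 * ((m : ℝ) + 1)) * θ + θ := by ring
    have h2 : (2 * (m : ℝ) + 1) * θ = (2 * ((m : ℝ) + 1)) * θ - θ := by ring
    push_cast
    rw [h1, h2, Real.sin_add, Real.sin_sub]
    ring

lemma aux_sum_cos_odd (α : ℝ) (n : ℕ) :
    2 * Real.sin α * ∑ j ∈ Finset.range n, Real.cos ((2 * (j : ℝ) + 1) * α) =
      Real.sin (2 * (n : ℝ) * α) := by
  induction n with
  | zero => simp
  | succ n ih =>
    rw [Finset.sum_range_succ, mul_add, ih]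
    have h1 : 2 * ((n : ℝ) + 1) * α = (2 * (n : ℝ) + 1) * α + α := by ring
    have h2 : 2 * (n : ℝ) * α = (2 * (n : ℝ) + 1) * α - α := by ring
    push_cast
    rw [h1, h2, Real.sin_add, Real.sin_sub]
    ring

theorem sum_inv_sin_odd (n : ℕ) (hn : Odd n) (hpos : 0 < n) :
    ∑ j ∈ Finset.Icc 1 n, (-1 : ℝ) ^ (j - 1) / Real.sin (π * (2 * j - 1) / (2 * n)) = n := by
  obtain ⟨m, hm⟩ := hn
  have hn0 : (n : ℝ) ≠ 0 := Nat.cast_ne_zero.mpr hpos.ne'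
  -- reindex to range n
  rw [← Finset.Ico_add_one_right_eq_Icc, Finset.sum_Ico_eq_sum_range]
  have key : ∀ k ∈ Finset.range n,
      (-1 : ℝ) ^ (1 + k - 1) / Real.sin (π * (2 * ↑(1 + k) - 1) / (2 * n)) =
        1 + ∑ l ∈ Finset.range m,
          2 * Real.cos ((2 * ((k : ℝ) + 1) - 1) * (((l : ℝ) + 1) * π / n)) := by
    intro k hk
    rw [Finset.mem_range] at hk
    set θ : ℝ := π * (2 * ↑(1 + k) - 1) / (2 * n) with hθ
    have hθeq : θ = (2 * (k : ℝ) + 1) * π / (2 * n) := by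
      rw [hθ]; push_cast; ring
    have hθpos : 0 < θ := by
      rw [hθeq]
      apply div_pos
      · positivity
      · positivity
    have hθlt : θ < π := by
      rw [hθeq, div_lt_iff₀ (by positivity)]
      have : (2 * (k : ℝ) + 1) < 2 * n := by
        have : (k : ℝ) + 1 ≤ n := by exact_mod_cast hk
        linarith
      nlinarith [Real.pi_pos]
    have hsθ : 0 < Real.sin θ := Real.sin_pos_of_pos_of_lt_pi hθpos hθlt
    -- sin (n * θ) = (-1)^k
    have hnθ : (n : ℝ) * θ = (k : ℝ) * π + π / 2 := by
      rw [hθeq]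
      field_simp
    have hsin_n : Real.sin ((2 * (m : ℝ) + 1) * θ) = (-1 : ℝ) ^ k := by
      have hmn : (2 * (m : ℝ) + 1) = (n : ℝ) := by
        rw [hm]; push_cast; ring
      rw [hmn, hnθ, Real.sin_add_pi_div_two]
      have := Real.cos_nat_mul_pi_sub 0 k
      simpa using this
    have hexp : aux_sin_odd_mul θ m = aux_sin_odd_mul θ m := rfl
    have h1 := aux_sin_odd_mul θ m
    rw [hsin_n] at h1
    -- rewrite the angles: 2*(l+1)*θ = (2k+1) * ((l+1)π/n)
    have hang : ∀ l : ℕ, (2 * ((l : ℝ) + 1)) * θ =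
        (2 * ((k : ℝ) + 1) - 1) * (((l : ℝ) + 1) * π / n) := by
      intro l
      rw [hθeq]
      field_simp
      ring
    rw [Nat.add_sub_cancel_left]
    rw [div_eq_iff hsθ.ne', h1, Finset.sum_congr rfl fun l _ => by rw [hang l]]
    rw [add_mul, one_mul, Finset.sum_mul]
    congr 1
    apply Finset.sum_congr rfl
    intro l _
    ring
  simp only [Nat.add_sub_cancel]
  rw [Finset.sum_congr rfl key]
  rw [Finset.sum_add_distrib, Finset.sum_const, Finset.card_range, nsmul_eq_mul, mul_one]
  rw [Finset.sum_comm]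
  have inner_zero : ∀ l ∈ Finset.range m,
      ∑ k ∈ Finset.range n,
        2 * Real.cos ((2 * ((k : ℝ) + 1) - 1) * (((l : ℝ) + 1) * π / n)) = 0 := by
    intro l hl
    rw [Finset.mem_range] at hl
    set α : ℝ := ((l : ℝ) + 1) * π / n with hα
    have hαpos : 0 < α := by rw [hα]; positivity
    have hαlt : α < π := by
      rw [hα, div_lt_iff₀ (by positivity)]
      have h1 : (l : ℝ) + 1 < n := by
        have : l + 1 ≤ m := hl
        have : (l : ℝ) + 1 ≤ m := by exact_mod_cast this
        have hmn : (m : ℝ) < n := by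
          have : m < n := by omega
          exact_mod_cast this
        linarith
      nlinarith [Real.pi_pos]
    have hsα : 0 < Real.sin α := Real.sin_pos_of_pos_of_lt_pi hαpos hαlt
    have h2 := aux_sum_cos_odd α n
    have h3 : Real.sin (2 * (n : ℝ) * α) = 0 := by
      have : 2 * (n : ℝ) * α = ((2 * (l + 1) : ℕ) : ℝ) * π := by
        rw [hα]; push_cast; field_simp
      rw [this]
      exact Real.sin_nat_mul_pi _
    rw [h3] at h2
    have h4 : ∑ j ∈ Finset.range n, Real.cos ((2 * (j : ℝ) + 1) * α) = 0 := by
      have h5 : 2 * Real.sin α ≠ 0 := by positivity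
      exact (mul_eq_zero.mp h2).resolve_left h5
    calc ∑ k ∈ Finset.range n, 2 * Real.cos ((2 * ((k : ℝ) + 1) - 1) * α)
        = 2 * ∑ k ∈ Finset.range n, Real.cos ((2 * (k : ℝ) + 1) * α) := by
          rw [Finset.mul_sum]
          apply Finset.sum_congr rfl
          intro k _
          ring_nf
      _ = 0 := by rw [h4]; ring
  rw [Finset.sum_congr rfl inner_zero]
  simp
end

section
/- For every even positive integer n, the finite sum ∑_{j=1}^{n} (-1)^{j} tan(π(2j-1)/(2n)) equals (-1)^{n/2} · n. -/
open Real Finset Complex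

theorem sum_tan_even (n : ℕ) (hn : Even n) (hpos : 0 < n) :
    ∑ j ∈ Finset.Icc 1 n, (-1 : ℝ) ^ j * Real.tan (π * (2 * j - 1) / (2 * n)) =
      (-1 : ℝ) ^ (n / 2) * n := by
  obtain ⟨m, hm⟩ := hn
  have hm2 : n = 2 * m := by omega
  have hmpos : 0 < m := by omega
  have hd : n / 2 = m := by omega
  have hnR : (n : ℝ) ≠ 0 := Nat.cast_ne_zero.mpr hpos.ne'
  have hnC : (n : ℂ) ≠ 0 := Nat.cast_ne_zero.mpr hpos.ne'
  have hmC : (m : ℂ) ≠ 0 := Nat.cast_ne_zero.mpr hmpos.ne'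
  set w : ℕ → ℂ := fun j => Complex.exp (↑π * Complex.I * (2 * j + 1) / n) with hw
  -- basic powers of w j
  have hwn : ∀ j : ℕ, w j ^ n = -1 := by
    intro j
    rw [hw]
    rw [← Complex.exp_nat_mul]
    have harg : (n : ℂ) * (↑π * Complex.I * (2 * j + 1) / n) = ((2 * j + 1 : ℕ) : ℂ) * (↑π * Complex.I) := by
      push_cast; field_simp
    rw [harg, Complex.exp_nat_mul, Complex.exp_pi_mul_I]
    exact Odd.neg_one_pow ⟨j, by ring⟩
  have hwm : ∀ j : ℕ, w j ^ m = (-1) ^ j * Complex.I := by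
    intro j
    rw [hw]
    rw [← Complex.exp_nat_mul]
    have harg : (m : ℂ) * (↑π * Complex.I * (2 * j + 1) / n) = ((2 * j + 1 : ℕ) : ℂ) * (↑(π / 2) * Complex.I) := by
      push_cast
      rw [hm2]; push_cast
      field_simp
    rw [harg, Complex.exp_nat_mul]
    have hI : Complex.exp (↑(π / 2) * Complex.I) = Complex.I := by
      rw [Complex.exp_mul_I]
      rw [← Complex.ofReal_cos, ← Complex.ofReal_sin, Real.cos_pi_div_two, Real.sin_pi_div_two]
      simp
    rw [hI]
    have : Complex.I ^ (2 * j + 1) = ((Complex.I ^ 2) ^ j) * Complex.I := by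
      rw [← pow_mul, pow_succ]
    rw [this, Complex.I_sq]
  -- cosine nonvanishing
  have hcosR : ∀ j : ℕ, Real.cos (π * (2 * (1 + (j : ℝ)) - 1) / (2 * n)) ≠ 0 := by
    intro j
    rw [Real.cos_ne_zero_iff]
    intro k hk
    have h2n : (2 * (n:ℝ)) ≠ 0 := by
      have : (0:ℝ) < n := by exact_mod_cast hpos
      positivity
    rw [div_eq_div_iff h2n (by norm_num : (2:ℝ) ≠ 0)] at hk
    have h2 : (2 * (1 + (j:ℝ)) - 1) * 2 = (2 * k + 1) * (2 * n) := by
      apply mul_left_cancel₀ Real.pi_ne_zero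
      linear_combination hk
    have hnm2 : ((n:ℝ)) = 2 * (m:ℝ) := by exact_mod_cast hm2
    have h3 : (2*(j:ℝ)+1) = (2*(k:ℝ)+1)*(2*(m:ℝ)) := by
      rw [hnm2] at h2
      linear_combination h2 / 2
    have h3' : (2*(j:ℤ)+1) = (2*(k:ℤ)+1)*(2*(m:ℤ)) := by exact_mod_cast h3
    obtain ⟨c, hc⟩ : Even ((2*(k:ℤ)+1)*(2*(m:ℤ))) := ⟨(2*k+1)*m, by ring⟩
    rw [hc] at h3'
    omega
  -- key per-term identity
  have key : ∀ j ∈ Finset.range n,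
      (-1 : ℂ) ^ (1 + j) * Complex.tan (↑π * (2 * ((1 + j : ℕ) : ℂ) - 1) / (2 * n)) =
        -Complex.I * (-1) ^ (1 + j) - ∑ k ∈ Finset.range n, (-1) ^ k * w j ^ (m + k) := by
    intro j _
    set θ : ℝ := π * (2 * (1 + (j : ℝ)) - 1) / (2 * n) with hθ
    have hargθ : ↑π * (2 * ((1 + j : ℕ) : ℂ) - 1) / (2 * n) = (θ : ℂ) := by
      rw [hθ]; push_cast; ring
    rw [hargθ]
    set e : ℂ := Complex.exp (θ * Complex.I) with he
    have hene : e ≠ 0 := Complex.exp_ne_zero _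
    have he2 : e * e = w j := by
      rw [he, hw, ← Complex.exp_add]
      congr 1
      rw [hθ]; push_cast; field_simp; ring
    have hcosC : Complex.cos (θ : ℂ) ≠ 0 := by
      rw [← Complex.ofReal_cos]
      exact Complex.ofReal_ne_zero.mpr (hcosR j)
    have hexpneg : Complex.exp (-(θ:ℂ) * Complex.I) = e⁻¹ := by
      rw [he, ← Complex.exp_neg]; ring_nf
    have h1 : Complex.sin (θ:ℂ) * 2 = (e⁻¹ - e) * Complex.I := by
      rw [mul_comm, Complex.two_sin, hexpneg, he]
    have h2 : Complex.cos (θ:ℂ) * 2 = e + e⁻¹ := by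
      rw [mul_comm, Complex.two_cos, hexpneg, he]
    have hef : e * e⁻¹ = 1 := mul_inv_cancel₀ hene
    have hv1 : w j + 1 ≠ 0 := by
      intro hcontra
      apply hcosC
      have hkey : e * (Complex.cos (θ:ℂ) * 2) = w j + 1 := by
        rw [h2, mul_add, hef, he2]
      have h0 : e * (Complex.cos (θ:ℂ) * 2) = 0 := by rw [hkey, hcontra]
      rcases mul_eq_zero.mp h0 with h | h
      · exact absurd h hene
      · rcases mul_eq_zero.mp h with h' | h'
        · exact h'
        · norm_num at h'
    have htan : Complex.tan (θ:ℂ) = (1 - w j) * Complex.I / (w j + 1) := by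
      rw [Complex.tan_eq_sin_div_cos, div_eq_div_iff hcosC hv1]
      linear_combination ((w j + 1)/2) * h1 - ((1 - w j)*Complex.I/2) * h2 + Complex.I * e * hef - Complex.I * e⁻¹ * he2
    have hsum : ∑ k ∈ Finset.range n, (-1 : ℂ) ^ k * w j ^ (m + k) = w j ^ m * (2 / (w j + 1)) := by
      have hterm : ∀ k : ℕ, (-1 : ℂ) ^ k * w j ^ (m + k) = w j ^ m * (-w j) ^ k := by
        intro k; rw [pow_add, neg_pow]; ring
      rw [Finset.sum_congr rfl (fun k _ => hterm k), ← Finset.mul_sum]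
      congr 1
      have hg := geom_sum_mul (-w j) n
      have hneg : (-w j) ^ n = -1 := by
        have hevn : Even n := ⟨m, hm⟩
        rw [hevn.neg_pow, hwn j]
      rw [hneg] at hg
      have hne : -w j - 1 ≠ 0 := by
        intro hc; apply hv1; linear_combination -hc
      field_simp
      linear_combination (-(1:ℂ)) * hg
    rw [htan, hsum, hwm j]
    field_simp [hv1]
    ring
  -- now the main computation over ℂ
  have hR : ((∑ j ∈ Finset.Icc 1 n, (-1 : ℝ) ^ j * Real.tan (π * (2 * j - 1) / (2 * n)) : ℝ) : ℂ)
      = (-1 : ℂ) ^ m * n := by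
    push_cast
    rw [← Finset.Ico_add_one_right_eq_Icc, Finset.sum_Ico_eq_sum_range]
    simp only [Nat.add_sub_cancel]
    rw [Finset.sum_congr rfl key]
    rw [Finset.sum_sub_distrib]
    have hfirst : ∑ j ∈ Finset.range n, -Complex.I * (-1 : ℂ) ^ (1 + j) = 0 := by
      have : ∑ j ∈ Finset.range n, (-1 : ℂ) ^ (1 + j) = -∑ j ∈ Finset.range n, (-1 : ℂ) ^ j := by
        rw [← Finset.sum_neg_distrib]
        exact Finset.sum_congr rfl fun j _ => by rw [pow_add]; ring
      rw [← Finset.mul_sum, this, neg_one_geom_sum, if_pos ⟨m, hm⟩]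
      ring
    rw [hfirst, zero_sub]
    rw [Finset.sum_comm]
    have hinner : ∀ k ∈ Finset.range n, ∑ j ∈ Finset.range n, (-1 : ℂ) ^ k * w j ^ (m + k)
        = if k = m then (-1 : ℂ) ^ m * (-n) else 0 := by
      intro k hk
      rw [Finset.mem_range] at hk
      by_cases hkm : k = m
      · subst hkm
        rw [if_pos rfl]
        have : ∀ j : ℕ, w j ^ (k + k) = -1 := by
          intro j
          have : k + k = n := by omega
          rw [this, hwn]
        rw [Finset.sum_congr rfl (fun j _ => by rw [this j]), ← Finset.mul_sum]
        simp
      · rw [if_neg hkm]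
        set t : ℕ := m + k with ht
        set q : ℂ := Complex.exp (2 * ↑π * Complex.I * t / n) with hq
        have hwt : ∀ j : ℕ, w j ^ t = Complex.exp (↑π * Complex.I * t / n) * q ^ j := by
          intro j
          rw [hw, hq, ← Complex.exp_nat_mul, ← Complex.exp_nat_mul, ← Complex.exp_add]
          congr 1
          push_cast; field_simp; ring
        have hqn : q ^ n = 1 := by
          rw [hq, ← Complex.exp_nat_mul]
          have : (n : ℂ) * (2 * ↑π * Complex.I * t / n) = (t : ℕ) * (2 * ↑π * Complex.I) := by
            push_cast; field_simp
          rw [this, Complex.exp_nat_mul, Complex.exp_two_pi_mul_I, one_pow]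
        have hq1 : q ≠ 1 := by
          intro hcontra
          obtain ⟨l, hl⟩ := Complex.exp_eq_one_iff.mp (hq ▸ hcontra)
          have h2πI : (2 * ↑π * Complex.I : ℂ) ≠ 0 := by
            simp [Real.pi_ne_zero, Complex.I_ne_zero]
          have htl : (t : ℂ) = l * n := by
            field_simp at hl
            have := hl
            -- hl : 2 * π * I * t = l * (2 * π * I) * n  (roughly)
            have h' : (2 * ↑π * Complex.I) * (t : ℂ) = (2 * ↑π * Complex.I) * ((l : ℂ) * n) := by
              linear_combination (2 * ↑π * Complex.I) * this
            exact mul_left_cancel₀ h2πI h'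
          have htl' : (t : ℤ) = l * n := by exact_mod_cast htl
          have hn' : (0:ℤ) < (n:ℤ) := by exact_mod_cast hpos
          have h1t : (0:ℤ) < (t:ℤ) := by omega
          have h2t : (t:ℤ) < 2 * (n:ℤ) := by omega
          rw [htl'] at h1t h2t
          have hl1 : l = 1 := by
            by_contra hne
            rcases lt_or_gt_of_ne hne with h | h
            · have hl0 : l ≤ 0 := by omega
              nlinarith
            · have hl2 : 2 ≤ l := by omega
              nlinarith
          rw [hl1, one_mul] at htl'
          omega
        rw [Finset.sum_congr rfl (fun j _ => by rw [hwt j]), ← Finset.mul_sum, ← Finset.mul_sum,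
          geom_sum_eq hq1, hqn]
        simp
    rw [Finset.sum_congr rfl hinner, Finset.sum_ite_eq' (Finset.range n) m]
    rw [if_pos (Finset.mem_range.mpr (by omega))]
    push_cast
    ring
  rw [hd]
  exact_mod_cast hR
end

section
/- Let n ≥ 2 and 1 ≤ j ≤ ⌊n/2⌋, and set θ = π(2j-1)/(2n), x_j = -i·sin²θ/(2cosθ). Then with principal branches, arcsin(√x_j) = π(2j-1)/(4n) - (i/2)·arcsinh(tan θ) and arcsinh(√x_j) = -i·π(2j-1)/(4n) + (1/2)·arcsinh(tan θ). -/
open Real Complex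

/-- Principal branch of the complex square root. -/
noncomputable def csqrt (z : ℂ) : ℂ := z ^ ((1 : ℂ) / 2)

/-- Principal branch of the complex arcsine. -/
noncomputable def carcsin (z : ℂ) : ℂ :=
  -Complex.I * Complex.log (Complex.I * z + csqrt (1 - z ^ 2))

/-- Principal branch of the complex inverse hyperbolic sine. -/
noncomputable def carsinh (z : ℂ) : ℂ := Complex.log (z + csqrt (1 + z ^ 2))

lemma csqrt_eq {z w : ℂ} (h : w ^ 2 = z) (hre : 0 < w.re) : csqrt z = w := by
  have hw : w ≠ 0 := by
    intro h0; rw [h0] at hre; simp at hre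
  have hz : z ≠ 0 := by rw [← h]; exact pow_ne_zero _ hw
  have harg : |w.arg| < π / 2 := Complex.abs_arg_lt_pi_div_two_iff.mpr (Or.inl hre)
  have harg' := abs_lt.mp harg
  have hlog : Complex.log z = 2 * Complex.log w := by
    have hzz : z = Complex.exp (2 * Complex.log w) := by
      rw [two_mul, Complex.exp_add, Complex.exp_log hw, ← sq, h]
    rw [hzz, Complex.log_exp]
    · simp only [Complex.mul_im, Complex.re_ofNat, Complex.im_ofNat, Complex.log_im]
      linarith [Real.pi_pos]
    · simp only [Complex.mul_im, Complex.re_ofNat, Complex.im_ofNat, Complex.log_im]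
      linarith [Real.pi_pos]
  rw [csqrt, Complex.cpow_def_of_ne_zero hz, hlog,
    show 2 * Complex.log w * (1 / 2) = Complex.log w by ring, Complex.exp_log hw]

theorem principal_branch_values (n j : ℕ) (hn : 2 ≤ n) (hj1 : 1 ≤ j) (hj2 : j ≤ n / 2) :
    let θ : ℝ := π * (2 * j - 1) / (2 * n)
    let x : ℂ := -Complex.I * (Real.sin θ : ℂ) ^ 2 / (2 * (Real.cos θ : ℂ))
    carcsin (csqrt x) =
        (π * (2 * j - 1) / (4 * n) : ℝ) -
          Complex.I / 2 * (Real.arsinh (Real.tan θ) : ℂ) ∧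
      carsinh (csqrt x) =
        -Complex.I * (π * (2 * j - 1) / (4 * n) : ℝ) +
          (1 : ℂ) / 2 * (Real.arsinh (Real.tan θ) : ℂ) := by
  intro θ x
  have hθval : θ = π * (2 * (j:ℝ) - 1) / (2 * (n:ℝ)) := rfl
  have hxval : x = -Complex.I * (Real.sin θ : ℂ) ^ 2 / (2 * (Real.cos θ : ℂ)) := rfl
  clear_value θ x
  -- basic bounds on θ
  have hn0 : (0:ℝ) < n := by positivity
  have hj : (1:ℝ) ≤ (j:ℝ) := by exact_mod_cast hj1
  have h2jn : 2 * (j:ℝ) ≤ (n:ℝ) := by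
    have : 2 * j ≤ n := by omega
    exact_mod_cast this
  have hθ0 : 0 < θ := by
    have : (0:ℝ) < 2 * (j:ℝ) - 1 := by linarith
    rw [hθval]
    exact div_pos (mul_pos Real.pi_pos this) (by positivity)
  have hθ1 : θ < π / 2 := by
    rw [hθval, div_lt_div_iff₀ (by positivity) (by norm_num)]
    nlinarith [Real.pi_pos]
  set a : ℝ := θ / 2 with ha_def
  have ha0 : 0 < a := by rw [ha_def]; linarith
  have ha1 : a < π / 4 := by rw [ha_def]; linarith
  set sa := Real.sin a with hsa_def
  set ca := Real.cos a with hca_def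
  have hsa : 0 < sa := Real.sin_pos_of_pos_of_lt_pi ha0 (by linarith [Real.pi_pos])
  have hca : 0 < ca :=
    Real.cos_pos_of_mem_Ioo ⟨by linarith [Real.pi_pos], by linarith [Real.pi_pos]⟩
  have hsaca : sa < ca := by
    rw [hsa_def, hca_def, ← Real.sin_pi_div_two_sub]
    exact Real.sin_lt_sin_of_lt_of_le_pi_div_two (by linarith) (by linarith) (by linarith)
  have hpyth : sa ^ 2 + ca ^ 2 = 1 := Real.sin_sq_add_cos_sq a
  have hcθ : Real.cos θ = ca ^ 2 - sa ^ 2 := by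
    rw [show θ = 2 * a by rw [ha_def]; ring, Real.cos_two_mul']
  have hsθ : Real.sin θ = 2 * sa * ca := by
    rw [show θ = 2 * a by rw [ha_def]; ring, Real.sin_two_mul]
  have hcθ0 : 0 < Real.cos θ := by rw [hcθ]; nlinarith
  have hsθ0 : 0 < Real.sin θ := by rw [hsθ]; positivity
  set g := Real.sqrt (Real.cos θ) with hg_def
  have hg0 : 0 < g := Real.sqrt_pos.mpr hcθ0
  have hg2 : g ^ 2 = ca ^ 2 - sa ^ 2 := by rw [hg_def, Real.sq_sqrt hcθ0.le, hcθ]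
  set r : ℝ := sa * ca / g with hr_def
  have hr0 : 0 < r := by rw [hr_def]; exact div_pos (mul_pos hsa hca) hg0
  set w : ℂ := (r : ℂ) * (1 - Complex.I) with hw_def
  -- the square root of x
  have hwre : 0 < w.re := by
    rw [hw_def]; simpa [Complex.mul_re] using hr0
  have hw2 : w ^ 2 = x := by
    have hcC : ((Real.cos θ : ℝ) : ℂ) ≠ 0 := by exact_mod_cast hcθ0.ne'
    have hx : x = -(((Real.sin θ ^ 2 / (2 * Real.cos θ) : ℝ)) : ℂ) * Complex.I := by
      rw [hxval]
      push_cast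
      ring
    have hreal : Real.sin θ ^ 2 / (2 * Real.cos θ) = 2 * r ^ 2 := by
      rw [hsθ, hcθ, hr_def, ← hg2]
      ring
    rw [hx, hreal, hw_def]
    push_cast
    linear_combination ((r : ℝ) : ℂ) ^ 2 * Complex.I_sq
  have hx1 : csqrt x = w := csqrt_eq hw2 hwre
  -- the square root of 1 - w ^ 2
  set v : ℂ := ((ca^2/g : ℝ) : ℂ) + ((sa^2/g : ℝ) : ℂ) * Complex.I with hv_def
  have hvre : 0 < v.re := by
    rw [hv_def]
    simp [← Complex.ofReal_pow]
    exact div_pos (pow_pos hca 2) hg0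
  have hwsq : w ^ 2 = -(((2 * r ^ 2 : ℝ)) : ℂ) * Complex.I := by
    rw [hw_def]
    push_cast
    linear_combination ((r : ℝ) : ℂ) ^ 2 * Complex.I_sq
  have hnum : (ca ^ 2) ^ 2 - (sa ^ 2) ^ 2 = g ^ 2 := by
    rw [hg2]
    linear_combination (ca ^ 2 - sa ^ 2) * hpyth
  have f1 : (ca ^ 2 / g) ^ 2 - (sa ^ 2 / g) ^ 2 = 1 := by
    rw [show (ca ^ 2 / g) ^ 2 - (sa ^ 2 / g) ^ 2 = ((ca ^ 2) ^ 2 - (sa ^ 2) ^ 2) / g ^ 2 by ring,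
      hnum, div_self (pow_ne_zero 2 hg0.ne')]
  have f2 : 2 * (ca ^ 2 / g) * (sa ^ 2 / g) = 2 * r ^ 2 := by
    rw [hr_def]; ring
  have f1C : (((ca ^ 2 / g : ℝ)) : ℂ) ^ 2 - (((sa ^ 2 / g : ℝ)) : ℂ) ^ 2 = 1 := by
    exact_mod_cast f1
  have f2C : 2 * (((ca ^ 2 / g : ℝ)) : ℂ) * (((sa ^ 2 / g : ℝ)) : ℂ) = 2 * ((r : ℝ) : ℂ) ^ 2 := by
    exact_mod_cast f2
  have hv2 : v ^ 2 = 1 - w ^ 2 := by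
    rw [hv_def, hwsq]
    push_cast at f1C f2C ⊢
    linear_combination f1C + Complex.I * f2C + ((sa : ℂ) ^ 2 / (g : ℂ)) ^ 2 * Complex.I_sq
  -- the square root of 1 + w ^ 2
  set v' : ℂ := ((ca^2/g : ℝ) : ℂ) - ((sa^2/g : ℝ) : ℂ) * Complex.I with hv'_def
  have hv're : 0 < v'.re := by
    rw [hv'_def]
    simp [← Complex.ofReal_pow]
    exact div_pos (pow_pos hca 2) hg0
  have hv'2 : v' ^ 2 = 1 + w ^ 2 := by
    rw [hv'_def, hwsq]
    push_cast at f1C f2C ⊢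
    linear_combination f1C - Complex.I * f2C + ((sa : ℂ) ^ 2 / (g : ℂ)) ^ 2 * Complex.I_sq
  -- the exponential of A/2
  set A : ℝ := Real.arsinh (Real.tan θ) with hA_def
  clear_value a sa ca g r w v v' A
  have hd1 : ca ^ 2 - sa ^ 2 ≠ 0 := by
    rw [← hg2]; positivity
  have hd2 : ca - sa ≠ 0 := (sub_pos.mpr hsaca).ne'
  have hexpA : Real.exp A = (ca + sa) / (ca - sa) := by
    rw [hA_def, Real.exp_arsinh]
    have h1 : Real.sqrt (1 + Real.tan θ ^ 2) = 1 / Real.cos θ := by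
      rw [← Real.inv_sqrt_one_add_tan_sq hcθ0, one_div, inv_inv]
    rw [h1, Real.tan_eq_sin_div_cos, hsθ, hcθ, ← add_div, div_eq_div_iff hd1 hd2]
    linear_combination (sa - ca) * hpyth
  have hexpA2 : Real.exp (A / 2) = (ca + sa) / g := by
    rw [Real.exp_half, hexpA,
      show (ca + sa) / (ca - sa) = ((ca + sa) / g)^2 by
        rw [div_pow, hg2, div_eq_div_iff hd2 hd1]; ring]
    exact Real.sqrt_sq (div_nonneg (by linarith) hg0.le)
  -- the key exponential identities
  have f3 : r + ca ^ 2 / g = (ca + sa) / g * ca := by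
    rw [hr_def]; ring
  have f4 : r + sa ^ 2 / g = (ca + sa) / g * sa := by
    rw [hr_def]; ring
  have f3C : ((r : ℝ) : ℂ) + (((ca ^ 2 / g : ℝ)) : ℂ) =
      (((( (ca + sa) / g ) : ℝ)) : ℂ) * ((ca : ℝ) : ℂ) := by exact_mod_cast f3
  have f4C : ((r : ℝ) : ℂ) + (((sa ^ 2 / g : ℝ)) : ℂ) =
      (((( (ca + sa) / g ) : ℝ)) : ℂ) * ((sa : ℝ) : ℂ) := by exact_mod_cast f4
  have hZ : Complex.I * w + v = Complex.exp (((A/2 : ℝ) : ℂ) + ((a : ℝ) : ℂ) * Complex.I) := by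
    rw [Complex.exp_add_mul_I, ← Complex.ofReal_exp, ← Complex.ofReal_cos,
      ← Complex.ofReal_sin, ← hsa_def, ← hca_def, hexpA2, hw_def, hv_def]
    push_cast at f3C f4C ⊢
    linear_combination f3C + Complex.I * f4C - ((r : ℝ) : ℂ) * Complex.I_sq
  have hZ' : w + v' = Complex.exp (((A/2 : ℝ) : ℂ) + ((-a : ℝ) : ℂ) * Complex.I) := by
    rw [Complex.exp_add_mul_I, ← Complex.ofReal_exp, ← Complex.ofReal_cos,
      ← Complex.ofReal_sin, Real.cos_neg, Real.sin_neg, ← hsa_def, ← hca_def,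
      hexpA2, hw_def, hv'_def]
    push_cast at f3C f4C ⊢
    linear_combination f3C - Complex.I * f4C
  have hpi4 : a < π := by linarith [Real.pi_pos]
  have hlog1 : Complex.log (Complex.I * w + v) = ((A/2 : ℝ) : ℂ) + ((a : ℝ) : ℂ) * Complex.I := by
    rw [hZ, Complex.log_exp] <;> simp <;> linarith
  have hlog2 : Complex.log (w + v') = ((A/2 : ℝ) : ℂ) + ((-a : ℝ) : ℂ) * Complex.I := by
    rw [hZ', Complex.log_exp] <;> simp <;> linarith
  have haval : a = π * (2 * (j:ℝ) - 1) / (4 * (n:ℝ)) := by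
    rw [ha_def, hθval]
    ring
  constructor
  · rw [hx1, carcsin, csqrt_eq hv2 hvre, hlog1, ← haval]
    push_cast
    linear_combination (-((a:ℝ) : ℂ)) * Complex.I_sq
  · rw [hx1, carsinh, csqrt_eq hv'2 hv're, hlog2, ← haval]
    push_cast
    ring
end

section
/- For integers n ≥ 2 and j with 1 ≤ j ≤ ⌊n/2⌋, setting θ = π(2j-1)/(2n), the real integral ∫_0^1 dt / ((4t² + sin⁴θ/cos²θ)·√(1-t²)) equals (π/2)·cot²θ/(1 + cos²θ). -/
open Real intervalIntegral

private lemma alg_aux (a t u v : ℝ) (ha : a ≠ 0) (hu : 0 < u) (hv : 0 < v)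
    (hu2 : u ^ 2 = a ^ 2 + 4) (hv2 : v ^ 2 = 1 - t ^ 2) :
    1 / (a * u) * (1 / (1 + (u / a * t / v) ^ 2) * ((u / a * v - u / a * t * (-(2 * t) / (2 * v))) / v ^ 2))
      = 1 / ((4 * t ^ 2 + a ^ 2) * v) := by
  have h4 : (4 * t ^ 2 + a ^ 2) ≠ 0 := by positivity
  field_simp
  ring_nf
  linear_combination (4*t^2) * hv2 - (t^2) * hu2

private lemma hasDerivAt_aux (a : ℝ) (ha : 0 < a) {t : ℝ} (h1 : t ^ 2 < 1) :
    HasDerivAt (fun t => 1 / (a * Real.sqrt (a ^ 2 + 4)) *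
        Real.arctan (Real.sqrt (a ^ 2 + 4) / a * t / Real.sqrt (1 - t ^ 2)))
      (1 / ((4 * t ^ 2 + a ^ 2) * Real.sqrt (1 - t ^ 2))) t := by
  have hs : 0 < Real.sqrt (a ^ 2 + 4) := Real.sqrt_pos.mpr (by positivity)
  have hs2 : Real.sqrt (a ^ 2 + 4) ^ 2 = a ^ 2 + 4 := Real.sq_sqrt (by positivity)
  have h1' : 0 < 1 - t ^ 2 := by linarith
  have hrt : 0 < Real.sqrt (1 - t ^ 2) := Real.sqrt_pos.mpr h1'
  have hrt2 : Real.sqrt (1 - t ^ 2) ^ 2 = 1 - t ^ 2 := Real.sq_sqrt h1'.le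
  have hd1 : HasDerivAt (fun t : ℝ => 1 - t ^ 2) (-(2 * t)) t := by
    simpa using (hasDerivAt_pow 2 t).const_sub 1
  have hd2 : HasDerivAt (fun t : ℝ => Real.sqrt (1 - t ^ 2))
      (-(2 * t) / (2 * Real.sqrt (1 - t ^ 2))) t := hd1.sqrt h1'.ne'
  have hd3 : HasDerivAt (fun t : ℝ => Real.sqrt (a ^ 2 + 4) / a * t)
      (Real.sqrt (a ^ 2 + 4) / a) t := by
    simpa using (hasDerivAt_id t).const_mul (Real.sqrt (a ^ 2 + 4) / a)
  have hd4 := ((hd3.div hd2 hrt.ne').arctan).const_mul (1 / (a * Real.sqrt (a ^ 2 + 4)))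
  exact hd4.congr_deriv (alg_aux a t _ _ ha.ne' hs hrt hs2 hrt2)

private lemma key_integral (a : ℝ) (ha : 0 < a) :
    ∫ t in (0:ℝ)..1, 1 / ((4 * t ^ 2 + a ^ 2) * Real.sqrt (1 - t ^ 2))
      = π / (2 * a * Real.sqrt (a ^ 2 + 4)) := by
  have hs : 0 < Real.sqrt (a ^ 2 + 4) := Real.sqrt_pos.mpr (by positivity)
  set g : ℝ → ℝ := fun t => 1 / ((4 * t ^ 2 + a ^ 2) * Real.sqrt (1 - t ^ 2)) with hg
  set c : ℝ := 1 / (a * Real.sqrt (a ^ 2 + 4)) with hc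
  set F : ℝ → ℝ := fun t => c * Real.arctan (Real.sqrt (a ^ 2 + 4) / a * t / Real.sqrt (1 - t ^ 2)) with hF
  set G : ℝ → ℝ := fun t => c * (π / 2 - Real.arctan (a / Real.sqrt (a ^ 2 + 4) * Real.sqrt (1 - t ^ 2) / t)) with hG
  -- F = G on (0,1)
  have hFG : ∀ t ∈ Set.Ioo (0:ℝ) 1, G t = F t := by
    intro t ht
    obtain ⟨ht0, ht1⟩ := ht
    have h1' : 0 < 1 - t ^ 2 := by nlinarith
    have hrt : 0 < Real.sqrt (1 - t ^ 2) := Real.sqrt_pos.mpr h1'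
    have hu : 0 < Real.sqrt (a ^ 2 + 4) / a * t / Real.sqrt (1 - t ^ 2) := by positivity
    have hinv : (Real.sqrt (a ^ 2 + 4) / a * t / Real.sqrt (1 - t ^ 2))⁻¹
        = a / Real.sqrt (a ^ 2 + 4) * Real.sqrt (1 - t ^ 2) / t := by
      field_simp
    simp only [hG, hF]
    rw [← hinv, Real.arctan_inv_of_pos hu]
    ring
  -- continuity of G on [1/2, 1]
  have hGcont : ContinuousOn G (Set.Icc (1/2 : ℝ) 1) := by
    apply ContinuousOn.mul continuousOn_const
    apply ContinuousOn.sub continuousOn_const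
    apply Real.continuous_arctan.comp_continuousOn
    apply ContinuousOn.div
    · exact (continuousOn_const.mul ((continuousOn_const.sub
        (continuousOn_pow 2)).sqrt))
    · exact continuousOn_id
    · intro x hx; have := hx.1; intro h; rw [h] at this; norm_num at this
  -- derivative of G on (1/2,1)
  have hGderiv : ∀ t ∈ Set.Ioo (1/2 : ℝ) 1, HasDerivAt G (g t) t := by
    intro t ht
    have h1 : t ^ 2 < 1 := by nlinarith [ht.1, ht.2]
    have hmem : t ∈ Set.Ioo (0:ℝ) 1 := ⟨by linarith [ht.1], ht.2⟩
    have heq : G =ᶠ[nhds t] F := by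
      filter_upwards [Ioo_mem_nhds hmem.1 hmem.2] with x hx using hFG x hx
    exact (hasDerivAt_aux a ha h1).congr_of_eventuallyEq heq
  -- nonnegativity of g
  have hgnn : ∀ t, 0 ≤ g t := by
    intro t
    apply div_nonneg (by norm_num)
    apply mul_nonneg (by positivity) (Real.sqrt_nonneg _)
  -- integrability on [1/2,1]
  have hint2 : IntervalIntegrable g MeasureTheory.volume (1/2) 1 := by
    apply intervalIntegrable_deriv_of_nonneg
    · rwa [Set.uIcc_of_le (by norm_num)]
    · intro x hx
      refine hGderiv x ?_
      have h1 : (1/2:ℝ) ⊓ 1 = 1/2 := inf_eq_left.mpr (by norm_num)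
      have h2 : (1/2:ℝ) ⊔ 1 = 1 := sup_eq_right.mpr (by norm_num)
      rwa [h1, h2] at hx
    · intro x _; exact hgnn x
  -- integrability on [0,1/2] : continuous
  have hgcont : ContinuousOn g (Set.Icc (0:ℝ) (1/2)) := by
    apply ContinuousOn.div continuousOn_const
    · exact ((continuousOn_const.mul (continuousOn_pow 2)).add continuousOn_const).mul
        ((continuousOn_const.sub (continuousOn_pow 2)).sqrt)
    · intro x hx
      have hx2 : x ^ 2 < 1 := by nlinarith [hx.1, hx.2]
      have : 0 < Real.sqrt (1 - x ^ 2) := Real.sqrt_pos.mpr (by linarith)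
      positivity
  have hint1 : IntervalIntegrable g MeasureTheory.volume 0 (1/2) := by
    apply ContinuousOn.intervalIntegrable
    rwa [Set.uIcc_of_le (by norm_num)]
  -- FTC on [0, 1/2]
  have hI1 : ∫ t in (0:ℝ)..(1/2), g t = F (1/2) - F 0 := by
    apply integral_eq_sub_of_hasDerivAt _ hint1
    intro t ht
    rw [Set.uIcc_of_le (by norm_num)] at ht
    have h1 : t ^ 2 < 1 := by nlinarith [ht.1, ht.2]
    exact hasDerivAt_aux a ha h1
  -- FTC on [1/2, 1]
  have hI2 : ∫ t in (1/2:ℝ)..1, g t = G 1 - G (1/2) :=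
    integral_eq_sub_of_hasDerivAt_of_le (by norm_num) hGcont hGderiv hint2
  have hsplit : ∫ t in (0:ℝ)..1, g t = (∫ t in (0:ℝ)..(1/2), g t) + ∫ t in (1/2:ℝ)..1, g t :=
    (integral_add_adjacent_intervals hint1 hint2).symm
  have hF0 : F 0 = 0 := by simp [hF]
  have hG1 : G 1 = c * (π / 2) := by
    simp only [hG]
    norm_num
  have hFG2 : G (1/2) = F (1/2) := hFG (1/2) (by norm_num)
  rw [hsplit, hI1, hI2, hF0, hG1, hFG2]
  rw [hc]
  ring

theorem integral_lemma_theta_j (n j : ℕ) (hn : 2 ≤ n) (hj1 : 1 ≤ j) (hj2 : j ≤ n / 2) :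
    let θ : ℝ := π * (2 * j - 1) / (2 * n)
    ∫ t in (0 : ℝ)..1,
        1 / ((4 * t ^ 2 + Real.sin θ ^ 4 / Real.cos θ ^ 2) * Real.sqrt (1 - t ^ 2)) =
      π / 2 * (Real.cos θ / Real.sin θ) ^ 2 / (1 + Real.cos θ ^ 2) := by
  intro θ
  have hn0 : (0:ℝ) < n := by positivity
  have hj1' : (1:ℝ) ≤ 2 * (j:ℝ) - 1 := by
    have : (1:ℝ) ≤ (j:ℝ) := by exact_mod_cast hj1
    linarith
  have hjn : 2 * (j:ℝ) ≤ (n:ℝ) := by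
    have h2j : 2 * j ≤ n := by
      have := Nat.div_mul_le_self n 2
      omega
    exact_mod_cast h2j
  have hθ1 : 0 < θ := by
    apply div_pos (by positivity) (by positivity)
  have hθ2 : θ < π / 2 := by
    rw [div_lt_iff₀ (by positivity)]
    have : (2 * (j:ℝ) - 1) < n := by linarith
    calc π * (2 * (j:ℝ) - 1) < π * n := by
          apply mul_lt_mul_of_pos_left this pi_pos
      _ = π / 2 * (2 * n) := by ring
  have hcos : 0 < Real.cos θ := Real.cos_pos_of_mem_Ioo ⟨by linarith [pi_pos], hθ2⟩
  have hsin : 0 < Real.sin θ := Real.sin_pos_of_pos_of_lt_pi hθ1 (by linarith [pi_pos])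
  set a : ℝ := Real.sin θ ^ 2 / Real.cos θ with ha_def
  have ha : 0 < a := by positivity
  have ha2 : a ^ 2 = Real.sin θ ^ 4 / Real.cos θ ^ 2 := by
    rw [ha_def]; field_simp
  rw [← ha2, key_integral a ha]
  -- now compute sqrt(a^2+4)
  have hpyth : Real.sin θ ^ 2 = 1 - Real.cos θ ^ 2 := by
    have := Real.sin_sq_add_cos_sq θ
    linarith
  have hsq : a ^ 2 + 4 = ((1 + Real.cos θ ^ 2) / Real.cos θ) ^ 2 := by
    rw [ha_def, hpyth]
    field_simp
    ring
  have hsqrt : Real.sqrt (a ^ 2 + 4) = (1 + Real.cos θ ^ 2) / Real.cos θ := by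
    rw [hsq, Real.sqrt_sq (by positivity)]
  rw [hsqrt, ha_def]
  have h1c : (0:ℝ) < 1 + Real.cos θ ^ 2 := by positivity
  field_simp
end

section
/- For any real θ ∈ (0, π/2), ∫_0^1 dt / ((4t² + sin⁴θ/cos²θ)·√(1-t²)) = (π/2)·cot²θ/(1 + cos²θ). -/
open Real intervalIntegral

theorem integral_lemma_theta (θ : ℝ) (h0 : 0 < θ) (h1 : θ < π / 2) :
    ∫ t in (0 : ℝ)..1,
        1 / ((4 * t ^ 2 + Real.sin θ ^ 4 / Real.cos θ ^ 2) * Real.sqrt (1 - t ^ 2)) =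
      π / 2 * (Real.cos θ / Real.sin θ) ^ 2 / (1 + Real.cos θ ^ 2) := by
  set s := Real.sin θ with hs_def
  set c := Real.cos θ with hc_def
  have hs : 0 < s := Real.sin_pos_of_pos_of_lt_pi h0 (h1.trans (by linarith [Real.pi_pos]))
  have hc : 0 < c := Real.cos_pos_of_mem_Ioo ⟨by linarith [Real.pi_pos], h1⟩
  have hsc : s ^ 2 = 1 - c ^ 2 := by
    rw [hs_def, hc_def]; nlinarith [Real.sin_sq_add_cos_sq θ]
  set A : ℝ := s ^ 4 / c ^ 2 with hA_def
  have hA : 0 < A := by positivity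
  set m : ℝ := (1 + c ^ 2) / s ^ 2 with hm_def
  have hm : 0 < m := by positivity
  set k : ℝ := c ^ 2 / (s ^ 2 * (1 + c ^ 2)) with hk_def
  set f : ℝ → ℝ := fun t => 1 / ((4 * t ^ 2 + A) * Real.sqrt (1 - t ^ 2)) with hf_def
  set G : ℝ → ℝ := fun t => if t = 1 then k * (π / 2)
      else k * Real.arctan (m * t / Real.sqrt (1 - t ^ 2)) with hG_def
  -- derivative
  have hderiv : ∀ x ∈ Set.Ioo (0:ℝ) 1, HasDerivAt G (f x) x := by
    intro x hx
    have hx1 : x ≠ 1 := ne_of_lt hx.2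
    have h1x : 0 < 1 - x ^ 2 := by nlinarith [hx.1, hx.2]
    have hsq : 0 < Real.sqrt (1 - x ^ 2) := Real.sqrt_pos.2 h1x
    have hsq2 : Real.sqrt (1 - x ^ 2) ^ 2 = 1 - x ^ 2 := Real.sq_sqrt h1x.le
    have d1 : HasDerivAt (fun t : ℝ => 1 - t ^ 2) (-(2 * x)) x := by
      simpa using ((hasDerivAt_pow 2 x).const_sub 1)
    have d2 : HasDerivAt (fun t : ℝ => Real.sqrt (1 - t ^ 2))
        (1 / (2 * Real.sqrt (1 - x ^ 2)) * (-(2 * x))) x :=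
      (Real.hasDerivAt_sqrt h1x.ne').comp x d1
    have d3 : HasDerivAt (fun t : ℝ => m * t) m x := by
      simpa using (hasDerivAt_id x).const_mul m
    have d4 : HasDerivAt (fun t : ℝ => m * t / Real.sqrt (1 - t ^ 2))
        ((m * Real.sqrt (1 - x ^ 2) - m * x * (1 / (2 * Real.sqrt (1 - x ^ 2)) * (-(2 * x)))) /
          (Real.sqrt (1 - x ^ 2)) ^ 2) x := d3.div d2 hsq.ne'
    have d5 : HasDerivAt (fun t : ℝ => k * Real.arctan (m * t / Real.sqrt (1 - t ^ 2)))
        (k * (1 / (1 + (m * x / Real.sqrt (1 - x ^ 2)) ^ 2) *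
          ((m * Real.sqrt (1 - x ^ 2) - m * x * (1 / (2 * Real.sqrt (1 - x ^ 2)) * (-(2 * x)))) /
            (Real.sqrt (1 - x ^ 2)) ^ 2))) x :=
      ((Real.hasDerivAt_arctan _).comp x d4).const_mul k
    have heq : G =ᶠ[nhds x] fun t => k * Real.arctan (m * t / Real.sqrt (1 - t ^ 2)) := by
      filter_upwards [isOpen_compl_singleton.mem_nhds (by simpa using hx1 :
        x ∈ ({1}ᶜ : Set ℝ))] with t ht
      simp only [hG_def, if_neg (by simpa using ht)]
    have := d5.congr_of_eventuallyEq heq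
    convert this using 1
    · rfl
    · rfl
    have hs2 : s ^ 2 ≠ 0 := by positivity
    have hc2 : c ^ 2 ≠ 0 := by positivity
    have h1c : (0:ℝ) < 1 + c ^ 2 := by positivity
    -- show f x = k * (... )
    simp only [hf_def, hA_def, hk_def, hm_def]
    field_simp
    linear_combination (-4*c^2*x^2) * hsq2 + (-x^2*(1-c^2+s^2)) * hsc
  -- continuity
  have hcont : ContinuousOn G (Set.Icc 0 1) := by
    intro x hx
    rcases eq_or_ne x 1 with rfl | hx1
    · rw [← continuousWithinAt_diff_self]
      have hsub : Set.Icc (0:ℝ) 1 \ {1} ⊆ Set.Ico 0 1 := by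
        rintro t ⟨⟨ht0, ht1⟩, ht⟩
        exact ⟨ht0, lt_of_le_of_ne ht1 (by simpa using ht)⟩
      have htend : Filter.Tendsto (fun t : ℝ => m * t / Real.sqrt (1 - t ^ 2))
          (nhdsWithin 1 (Set.Icc (0:ℝ) 1 \ {1})) Filter.atTop := by
        have h1 : Filter.Tendsto (fun t : ℝ => Real.sqrt (1 - t ^ 2))
            (nhdsWithin 1 (Set.Icc (0:ℝ) 1 \ {1})) (nhdsWithin 0 (Set.Ioi 0)) := by
          apply tendsto_nhdsWithin_of_tendsto_nhds_of_eventually_within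
          · have : Filter.Tendsto (fun t : ℝ => Real.sqrt (1 - t ^ 2)) (nhds 1)
                (nhds (Real.sqrt (1 - 1 ^ 2))) := by
              exact ((continuous_const.sub (continuous_pow 2)).sqrt).tendsto 1
            simpa using this.mono_left nhdsWithin_le_nhds
          · filter_upwards [self_mem_nhdsWithin] with t ht
            have ht' := hsub ht
            have : 0 < 1 - t ^ 2 := by nlinarith [ht'.1, ht'.2]
            exact Real.sqrt_pos.2 this
        have h2 : Filter.Tendsto (fun t : ℝ => (Real.sqrt (1 - t ^ 2))⁻¹)
            (nhdsWithin 1 (Set.Icc (0:ℝ) 1 \ {1})) Filter.atTop := h1.inv_tendsto_nhdsGT_zero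
        have h3 : Filter.Tendsto (fun t : ℝ => m * t)
            (nhdsWithin 1 (Set.Icc (0:ℝ) 1 \ {1})) (nhds m) := by
          have : Filter.Tendsto (fun t : ℝ => m * t) (nhds 1) (nhds (m * 1)) :=
            (continuous_const.mul continuous_id).tendsto 1
          simpa using this.mono_left nhdsWithin_le_nhds
        have := h3.pos_mul_atTop hm h2
        simpa [div_eq_mul_inv] using this
      have harc : Filter.Tendsto (fun t : ℝ => k * Real.arctan (m * t / Real.sqrt (1 - t ^ 2)))
          (nhdsWithin 1 (Set.Icc (0:ℝ) 1 \ {1})) (nhds (k * (π / 2))) := by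
        have := (Real.tendsto_arctan_atTop.mono_right nhdsWithin_le_nhds).comp htend
        exact this.const_mul k
      have : Filter.Tendsto G (nhdsWithin 1 (Set.Icc (0:ℝ) 1 \ {1})) (nhds (k * (π / 2))) := by
        apply harc.congr'
        filter_upwards [self_mem_nhdsWithin] with t ht
        have ht1 : t ≠ 1 := by
          have := hsub ht; exact ne_of_lt this.2
        simp only [hG_def, if_neg ht1]
      simpa only [ContinuousWithinAt, hG_def, if_pos rfl] using this
    · have hx1' : x < 1 := lt_of_le_of_ne hx.2 hx1
      have h1x : 0 < 1 - x ^ 2 := by nlinarith [hx.1]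
      have hca : ContinuousAt (fun t : ℝ => k * Real.arctan (m * t / Real.sqrt (1 - t ^ 2))) x := by
        apply ContinuousAt.mul continuousAt_const
        apply Real.continuous_arctan.continuousAt.comp
        apply ContinuousAt.div
        · exact (continuous_const.mul continuous_id).continuousAt
        · exact ((continuous_const.sub (continuous_pow 2)).sqrt).continuousAt
        · exact (Real.sqrt_pos.2 h1x).ne'
      have heq : G =ᶠ[nhds x] fun t => k * Real.arctan (m * t / Real.sqrt (1 - t ^ 2)) := by
        filter_upwards [isOpen_compl_singleton.mem_nhds (by simpa using hx1 :
          x ∈ ({1}ᶜ : Set ℝ))] with t ht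
        simp only [hG_def, if_neg (by simpa using ht)]
      exact (hca.congr heq.symm).continuousWithinAt
  -- integrability
  have hint : IntervalIntegrable f MeasureTheory.volume 0 1 := by
    rw [intervalIntegrable_iff_integrableOn_Ioc_of_le (by norm_num)]
    apply intervalIntegral.integrableOn_deriv_of_nonneg hcont hderiv
    intro x hx
    have h1x : 0 < 1 - x ^ 2 := by nlinarith [hx.1, hx.2]
    have := Real.sqrt_pos.2 h1x
    positivity
  -- FTC
  have hftc := intervalIntegral.integral_eq_sub_of_hasDeriv_right_of_le (by norm_num : (0:ℝ) ≤ 1)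
    hcont (fun x hx => (hderiv x hx).hasDerivWithinAt) hint
  have hG1 : G 1 = k * (π / 2) := by simp [hG_def]
  have hG0 : G 0 = 0 := by
    simp [hG_def]
  have : ∫ t in (0:ℝ)..1, f t = k * (π / 2) := by rw [hftc, hG1, hG0, sub_zero]
  have hgoal : (∫ t in (0 : ℝ)..1,
      1 / ((4 * t ^ 2 + s ^ 4 / c ^ 2) * Real.sqrt (1 - t ^ 2))) = k * (π / 2) := this
  rw [hgoal, hk_def]
  field_simp
end

section
/- For every positive integer n, the function Q_n(t) := cos(2n·arcsin√t) + cosh(2n·arcsinh√t) (extended analytically) is an even polynomial in t of degree 2⌊n/2⌋ with leading coefficient 2^{2n-1}(1 + (-1)^n), and its roots are exactly ±i·sin²(π(2j-1)/(2n))/(2cos(π(2j-1)/(2n))) for j = 1, ..., ⌊n/2⌋. -/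
open Real Complex Polynomial Finset

section QnAux
open Polynomial.Chebyshev

lemma two_eq_C : (2 : ℂ[X]) = C 2 := (map_ofNat Polynomial.C 2).symm

lemma coeff_two_X_mul (p : ℂ[X]) (k : ℕ) : (2 * X * p).coeff (k+1) = 2 * p.coeff k := by
  rw [mul_assoc, two_eq_C, coeff_C_mul, coeff_X_mul]

lemma T_natDegree_le (n : ℕ) : (T ℂ n).natDegree ≤ n := by
  induction n using Nat.strong_induction_on with
  | _ n ih =>
    match n with
    | 0 => simp [T_zero]
    | 1 => simp [T_one]
    | (k+2) =>
      rw [show ((k+2:ℕ):ℤ) = (k:ℤ) + 2 by push_cast; ring, T_add_two]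
      refine le_trans (natDegree_sub_le _ _) ?_
      have h1 : (2 * X * T ℂ ((k:ℤ)+1)).natDegree ≤ k + 2 := by
        refine le_trans (natDegree_mul_le) ?_
        have := ih (k+1) (by omega)
        have h2 : ((k:ℤ)+1) = ((k+1:ℕ):ℤ) := by push_cast; ring
        rw [h2]
        have : (2 * X : ℂ[X]).natDegree ≤ 1 := by
          refine le_trans natDegree_mul_le ?_; simp
        omega
      have h2 : (T ℂ (k:ℤ)).natDegree ≤ k := ih k (by omega)
      omega

lemma T_coeff_top (n : ℕ) : (T ℂ ((n:ℤ)+1)).coeff (n+1) = 2 ^ n := by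
  induction n using Nat.strong_induction_on with
  | _ n ih =>
    match n with
    | 0 => simp [T_one]
    | 1 =>
      rw [show ((1:ℕ):ℤ)+1 = (0:ℤ)+2 by ring, T_add_two, T_zero, show (0:ℤ)+1 = 1 by ring, T_one, coeff_sub]
      rw [show (1+1 : ℕ) = 1 + 1 by rfl, coeff_two_X_mul]
      simp [coeff_one]
    | (k+2) =>
      rw [show ((k+2:ℕ):ℤ)+1 = (k:ℤ)+1+2 by push_cast; ring, T_add_two, coeff_sub]
      have hlow : (T ℂ ((k:ℤ)+1)).coeff (k+2+1) = 0 := by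
        apply coeff_eq_zero_of_natDegree_lt
        have := T_natDegree_le (k+1)
        rw [show ((k+1:ℕ):ℤ) = (k:ℤ)+1 by push_cast; ring] at this
        omega
      rw [hlow, sub_zero, show (k+2+1 : ℕ) = (k+1)+1+1 by ring, coeff_two_X_mul]
      have := ih (k+1) (by omega)
      rw [show ((k+1:ℕ):ℤ)+1 = (k:ℤ)+1+1 by push_cast; ring] at this
      rw [this]; ring

lemma T_natDegree (n : ℕ) : (T ℂ ((n:ℤ)+1)).natDegree = n+1 := by
  have h1 := T_natDegree_le (n+1)
  rw [show ((n+1:ℕ):ℤ) = (n:ℤ)+1 by push_cast; ring] at h1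
  have h2 := T_coeff_top n
  have : (T ℂ ((n:ℤ)+1)).coeff (n+1) ≠ 0 := by rw [h2]; exact pow_ne_zero _ two_ne_zero
  have := le_natDegree_of_ne_zero this
  omega

lemma T_leadingCoeff (n : ℕ) : (T ℂ ((n:ℤ)+1)).leadingCoeff = 2 ^ n := by
  rw [leadingCoeff, T_natDegree, T_coeff_top]

lemma coeff_comp_neg_X (p : ℂ[X]) (m : ℕ) : (p.comp (-X)).coeff m = (-1)^m * p.coeff m := by
  induction p using Polynomial.induction_on' with
  | add p q hp hq => simp [add_comp, coeff_add, hp, hq]; ring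
  | monomial k a =>
    rw [monomial_comp, neg_pow, coeff_C_mul, show ((-1:ℂ[X])) = C (-1) by simp, ← C_pow, coeff_C_mul, coeff_X_pow, coeff_monomial]
    by_cases h : k = m
    · simp [h]; ring
    · simp [h]; exact fun hm => absurd hm.symm h

lemma T_eval_cosh (k : ℤ) (z : ℂ) : (T ℂ k).eval (Complex.cosh z) = Complex.cosh (k * z) := by
  rw [← Complex.cos_mul_I, T_complex_cos, ← Complex.cos_mul_I]
  ring_nf


noncomputable def Pn (n : ℕ) : Polynomial ℂ :=
  (T ℂ n).comp (1 - 2*X) + (T ℂ n).comp (1 + 2*X)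

lemma Pn_eval (n : ℕ) (z : ℂ) :
    (Pn n).eval z = (T ℂ n).eval (1 - 2*z) + (T ℂ n).eval (1 + 2*z) := by
  simp [Pn, eval_comp]

lemma Pn_root (n : ℕ) (θ : ℝ) (hθ1 : 0 < θ) (hθ2 : θ < π/2)
    (hcos : Real.cos ((n:ℝ) * θ) = 0) :
    (Pn n).eval (Complex.I * (Real.sin θ : ℂ)^2 / (2 * (Real.cos θ : ℂ))) = 0 := by
  set c : ℝ := Real.cos θ with hc
  have hcpos : 0 < c := Real.cos_pos_of_mem_Ioo ⟨by linarith [Real.pi_pos], hθ2⟩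
  set ψ : ℝ := Real.arsinh (Real.tan θ) with hψ
  have hsinh : Real.sinh ψ = Real.tan θ := Real.sinh_arsinh _
  have hcosh : Real.cosh ψ = c⁻¹ := by
    rw [hψ, Real.cosh_arsinh, hc, ← Real.inv_sqrt_one_add_tan_sq (hc ▸ hcpos), inv_inv]
  set z : ℂ := Complex.I * (Real.sin θ : ℂ)^2 / (2 * (c : ℂ)) with hz
  have hcne : (c : ℂ) ≠ 0 := by exact_mod_cast hcpos.ne'
  have htan : (Real.tan θ : ℂ) = (Real.sin θ : ℂ) / (c : ℂ) := by
    rw [Real.tan_eq_sin_div_cos, ← hc]; push_cast; rfl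
  have h1 : (1 : ℂ) - 2*z = Complex.cos ((θ : ℂ) + (ψ : ℂ) * Complex.I) := by
    rw [Complex.cos_add, Complex.cos_mul_I, Complex.sin_mul_I,
      ← Complex.ofReal_cosh, ← Complex.ofReal_sinh, hcosh, hsinh, htan,
      ← Complex.ofReal_cos, ← Complex.ofReal_sin, ← hc]
    push_cast
    field_simp [hz]
    rw [hz]; push_cast; field_simp
  have h2 : (1 : ℂ) + 2*z = Complex.cos ((θ : ℂ) - (ψ : ℂ) * Complex.I) := by
    rw [Complex.cos_sub, Complex.cos_mul_I, Complex.sin_mul_I,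
      ← Complex.ofReal_cosh, ← Complex.ofReal_sinh, hcosh, hsinh, htan,
      ← Complex.ofReal_cos, ← Complex.ofReal_sin, ← hc]
    push_cast
    field_simp [hz]
    rw [hz]; push_cast; field_simp
  have hcz : Complex.cos ((n:ℂ) * (θ:ℂ)) = 0 := by
    have : ((n:ℂ) * (θ:ℂ)) = (((n:ℝ) * θ : ℝ) : ℂ) := by push_cast; ring
    rw [this, ← Complex.ofReal_cos, hcos, Complex.ofReal_zero]
  rw [Pn_eval, h1, h2, T_complex_cos, T_complex_cos, mul_add, mul_sub,
    Complex.cos_add, Complex.cos_sub]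
  push_cast
  rw [hcz]
  ring

lemma Pn_eval_neg (n : ℕ) (z : ℂ) : (Pn n).eval (-z) = (Pn n).eval z := by
  rw [Pn_eval, Pn_eval, show (1 : ℂ) - 2*(-z) = 1 + 2*z by ring,
    show (1:ℂ) + 2*(-z) = 1 - 2*z by ring, add_comm]

lemma Pn_eval_zero (n : ℕ) : (Pn n).eval 0 = 2 := by
  rw [Pn_eval]
  have h1 : (1 : ℂ) = Complex.cos 0 := by simp
  simp only [mul_zero, sub_zero, add_zero, h1, T_complex_cos]
  norm_num







lemma lin_plus_natDegree : (1 + 2*X : ℂ[X]).natDegree = 1 := by compute_degree!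
lemma lin_minus_natDegree : (1 - 2*X : ℂ[X]).natDegree = 1 := by compute_degree!
lemma lin_plus_leadingCoeff : (1 + 2*X : ℂ[X]).leadingCoeff = 2 := by
  rw [leadingCoeff, lin_plus_natDegree]
  simp [coeff_one, (map_ofNat Polynomial.C 2).symm, coeff_C_mul]
lemma lin_minus_leadingCoeff : (1 - 2*X : ℂ[X]).leadingCoeff = -2 := by
  rw [leadingCoeff, lin_minus_natDegree]
  rw [coeff_sub, show (2*X : ℂ[X]) = Polynomial.C 2 * X from by rw [map_ofNat Polynomial.C 2], coeff_C_mul]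
  simp [coeff_one]

lemma TD (n : ℕ) (hn : 0 < n) : (T ℂ (n:ℤ)).natDegree = n ∧ (T ℂ (n:ℤ)).leadingCoeff = 2^(n-1) := by
  obtain ⟨k, rfl⟩ : ∃ k, n = k + 1 := ⟨n-1, by omega⟩
  have hc : ((k+1:ℕ):ℤ) = (k:ℤ)+1 := by push_cast; ring
  rw [hc, T_natDegree, T_leadingCoeff]
  simp

lemma comp_minus_natDegree (n : ℕ) (hn : 0 < n) :
    ((T ℂ (n:ℤ)).comp (1 - 2*X)).natDegree = n := by
  rw [natDegree_comp, (TD n hn).1, lin_minus_natDegree, mul_one]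
lemma comp_plus_natDegree (n : ℕ) (hn : 0 < n) :
    ((T ℂ (n:ℤ)).comp (1 + 2*X)).natDegree = n := by
  rw [natDegree_comp, (TD n hn).1, lin_plus_natDegree, mul_one]

lemma Pn_coeff_n (n : ℕ) (hn : 0 < n) :
    (Pn n).coeff n = 2 ^ (2*n - 1) * (1 + (-1 : ℂ)^n) := by
  have c1 : ((T ℂ (n:ℤ)).comp (1 - 2*X)).coeff n = 2^(n-1) * (-2)^n := by
    have h := coeff_natDegree (p := (T ℂ (n:ℤ)).comp (1 - 2*X))
    rw [comp_minus_natDegree n hn] at h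
    rw [h, leadingCoeff_comp (by rw [lin_minus_natDegree]; omega),
      (TD n hn).2, lin_minus_leadingCoeff, (TD n hn).1]
  have c2 : ((T ℂ (n:ℤ)).comp (1 + 2*X)).coeff n = 2^(n-1) * 2^n := by
    have h := coeff_natDegree (p := (T ℂ (n:ℤ)).comp (1 + 2*X))
    rw [comp_plus_natDegree n hn] at h
    rw [h, leadingCoeff_comp (by rw [lin_plus_natDegree]; omega),
      (TD n hn).2, lin_plus_leadingCoeff, (TD n hn).1]
  rw [Pn, coeff_add, c1, c2]
  have hp : (2:ℂ)^(2*n-1) = 2^(n-1) * 2^n := by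
    rw [← pow_add]; congr 1; omega
  rw [hp, neg_pow]
  ring

lemma Pn_natDegree_le (n : ℕ) (hn : 0 < n) : (Pn n).natDegree ≤ n := by
  refine le_trans (natDegree_add_le _ _) ?_
  rw [comp_minus_natDegree n hn, comp_plus_natDegree n hn]; omega

lemma Pn_odd_coeff (n : ℕ) (m : ℕ) (hm : Odd m) : (Pn n).coeff m = 0 := by
  have h : (T ℂ (n:ℤ)).comp (1 - 2*X) = ((T ℂ (n:ℤ)).comp (1 + 2*X)).comp (-X) := by
    rw [comp_assoc]
    congr 1
    simp [add_comp, mul_comp]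
    ring
  rw [Pn, coeff_add, h, coeff_comp_neg_X, hm.neg_one_pow]
  ring

lemma Pn_agree (n : ℕ) (t : ℝ) (ht : t ∈ Set.Icc (0:ℝ) 1) :
    (Pn n).eval (t : ℂ) =
      ((Real.cos (2 * n * Real.arcsin (Real.sqrt t)) +
        Real.cosh (2 * n * Real.arsinh (Real.sqrt t)) : ℝ) : ℂ) := by
  obtain ⟨ht0, ht1⟩ := ht
  set u := Real.sqrt t with hu
  have hu1 : u ≤ 1 := Real.sqrt_le_one.2 ht1
  have hu0 : 0 ≤ u := Real.sqrt_nonneg t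
  have husq : u^2 = t := Real.sq_sqrt ht0
  have h1r : Real.cos (2 * Real.arcsin u) = 1 - 2*t := by
    rw [Real.cos_two_mul', Real.cos_sq', Real.sin_arcsin (by linarith) hu1, husq]
    ring
  have h2r : Real.cosh (2 * Real.arsinh u) = 1 + 2*t := by
    rw [Real.cosh_two_mul, Real.cosh_sq, Real.sinh_arsinh, husq]
    ring
  have e1 : (T ℂ (n:ℤ)).eval ((1:ℂ) - 2*(t:ℂ)) = ((Real.cos (2*n*Real.arcsin u) : ℝ) : ℂ) := by
    rw [show ((1:ℂ) - 2*(t:ℂ)) = ((1 - 2*t : ℝ) : ℂ) by push_cast; ring, ← h1r,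
      Complex.ofReal_cos, T_complex_cos,
      show (((n:ℤ):ℂ) * ((2*Real.arcsin u : ℝ):ℂ)) = ((2*n*Real.arcsin u : ℝ):ℂ) by push_cast; ring,
      Complex.ofReal_cos]
  have e2 : (T ℂ (n:ℤ)).eval ((1:ℂ) + 2*(t:ℂ)) = ((Real.cosh (2*n*Real.arsinh u) : ℝ) : ℂ) := by
    rw [show ((1:ℂ) + 2*(t:ℂ)) = ((1 + 2*t : ℝ) : ℂ) by push_cast; ring, ← h2r,
      Complex.ofReal_cosh, T_eval_cosh,
      show (((n:ℤ):ℂ) * ((2*Real.arsinh u : ℝ):ℂ)) = ((2*n*Real.arsinh u : ℝ):ℂ) by push_cast; ring,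
      Complex.ofReal_cosh]
  rw [Pn_eval, e1, e2]
  push_cast
  ring

end QnAux

section QnMain
open Polynomial.Chebyshev










theorem Qn_polynomial_structure (n : ℕ) (hn : 0 < n) (Q : Polynomial ℂ)
    (hQ : ∀ t : ℝ, t ∈ Set.Icc (0 : ℝ) 1 → Q.eval (t : ℂ) =
      ((Real.cos (2 * n * Real.arcsin (Real.sqrt t)) +
        Real.cosh (2 * n * Real.arsinh (Real.sqrt t)) : ℝ) : ℂ)) :
    (∀ m : ℕ, Odd m → Q.coeff m = 0) ∧
      Q.natDegree = 2 * (n / 2) ∧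
      Q.coeff n = 2 ^ (2 * n - 1) * (1 + (-1 : ℂ) ^ n) ∧
      (∀ z : ℂ, Q.eval z = 0 ↔
        ∃ j ∈ Finset.Icc 1 (n / 2),
          z = Complex.I * (Real.sin (π * (2 * j - 1) / (2 * n)) : ℂ) ^ 2 /
              (2 * (Real.cos (π * (2 * j - 1) / (2 * n)) : ℂ)) ∨
          z = -Complex.I * (Real.sin (π * (2 * j - 1) / (2 * n)) : ℂ) ^ 2 /
              (2 * (Real.cos (π * (2 * j - 1) / (2 * n)) : ℂ))) := by
  -- Step 1 : Q = Pn n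
  have hQP : Q = Pn n := by
    apply Polynomial.eq_of_infinite_eval_eq
    apply Set.Infinite.mono (s := (fun t : ℝ => (t : ℂ)) '' Set.Icc 0 1)
    · rintro z ⟨t, ht, rfl⟩
      simp only [Set.mem_setOf_eq]
      rw [hQ t ht, Pn_agree n t ht]
    · exact (Set.Icc_infinite (by norm_num)).image
        (fun a _ b _ h => Complex.ofReal_injective h)
  subst hQP
  -- basic data
  have hPne : Pn n ≠ 0 := by
    intro h
    have := Pn_eval_zero n
    rw [h] at this
    simp at this
  have hnR : (0:ℝ) < (n:ℝ) := by exact_mod_cast hn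
  set m := n / 2 with hm
  have th_def : True := trivial
  let th : ℕ → ℝ := fun j => π * (2*(j:ℝ) - 1) / (2*(n:ℝ))
  let f : ℕ → ℂ := fun j =>
    Complex.I * (Real.sin (th j) : ℂ)^2 / (2 * (Real.cos (th j) : ℂ))
  let rr : ℕ → ℝ := fun j => Real.sin (th j)^2 / (2 * Real.cos (th j))
  have hθ : ∀ j, 1 ≤ j → j ≤ m → 0 < th j ∧ th j < π/2 := by
    intro j h1 h2
    have hj1 : (1:ℝ) ≤ (j:ℝ) := by exact_mod_cast h1
    have hj2 : 2*(j:ℝ) - 1 < (n:ℝ) := by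
      have h3 : 2*j ≤ n := by omega
      have h4 : ((2*j : ℕ):ℝ) ≤ (n:ℝ) := by exact_mod_cast h3
      push_cast at h4
      linarith
    constructor
    · apply div_pos (by nlinarith [Real.pi_pos]) (by linarith)
    · rw [div_lt_iff₀ (by linarith)]
      nlinarith [Real.pi_pos]
  have hcth : ∀ j, 1 ≤ j → j ≤ m → 0 < Real.cos (th j) := by
    intro j h1 h2
    exact Real.cos_pos_of_mem_Ioo
      ⟨by linarith [(hθ j h1 h2).1, Real.pi_pos], (hθ j h1 h2).2⟩
  have hsth : ∀ j, 1 ≤ j → j ≤ m → 0 < Real.sin (th j) := by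
    intro j h1 h2
    exact Real.sin_pos_of_pos_of_lt_pi (hθ j h1 h2).1
      (by linarith [(hθ j h1 h2).2, Real.pi_pos])
  have hcosn : ∀ j, 1 ≤ j → j ≤ m → Real.cos ((n:ℝ) * th j) = 0 := by
    intro j h1 h2
    rw [Real.cos_eq_zero_iff]
    refine ⟨(j:ℤ) - 1, ?_⟩
    show (n:ℝ) * (π * (2*(j:ℝ) - 1) / (2*(n:ℝ))) = _
    field_simp
    push_cast
    ring
  have hroot : ∀ j, 1 ≤ j → j ≤ m → (Pn n).eval (f j) = 0 := by
    intro j h1 h2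
    exact Pn_root n (th j) (hθ j h1 h2).1 (hθ j h1 h2).2 (hcosn j h1 h2)
  have hfrr : ∀ j, f j = Complex.I * ((rr j : ℝ) : ℂ) := by
    intro j
    show Complex.I * _ / _ = _
    rw [Complex.ofReal_div, Complex.ofReal_mul, Complex.ofReal_pow, Complex.ofReal_ofNat]
    ring
  have hfim : ∀ j, (f j).im = rr j := by
    intro j; rw [hfrr]; simp
  have hrrpos : ∀ j, 1 ≤ j → j ≤ m → 0 < rr j := by
    intro j h1 h2
    exact div_pos (pow_pos (hsth j h1 h2) 2) (by linarith [hcth j h1 h2])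
  have hrrmono : ∀ j k, 1 ≤ j → j ≤ m → 1 ≤ k → k ≤ m → j < k → rr j < rr k := by
    intro j k hj1 hj2 hk1 hk2 hjk
    have hthlt : th j < th k := by
      show π * (2*(j:ℝ) - 1) / (2*(n:ℝ)) < π * (2*(k:ℝ) - 1) / (2*(n:ℝ))
      have hjk' : (j:ℝ) < (k:ℝ) := by exact_mod_cast hjk
      rw [div_lt_div_iff₀ (by linarith) (by linarith)]
      have h5 : (0:ℝ) < π * (2*(n:ℝ)) := by positivity
      nlinarith [mul_lt_mul_of_pos_right (show 2*(j:ℝ)-1 < 2*(k:ℝ)-1 by linarith) h5]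
    have hcj := hcth j hj1 hj2
    have hck := hcth k hk1 hk2
    have hclt : Real.cos (th k) < Real.cos (th j) :=
      Real.cos_lt_cos_of_nonneg_of_le_pi (hθ j hj1 hj2).1.le
        (by linarith [(hθ k hk1 hk2).2, Real.pi_pos]) hthlt
    show Real.sin (th j)^2 / (2 * Real.cos (th j)) < Real.sin (th k)^2 / (2 * Real.cos (th k))
    rw [Real.sin_sq, Real.sin_sq, div_lt_div_iff₀ (by linarith) (by linarith)]
    nlinarith [mul_pos (sub_pos.2 hclt) (show 0 < 1 + Real.cos (th j) * Real.cos (th k) by nlinarith)]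
  have hrrinj : ∀ j k, 1 ≤ j → j ≤ m → 1 ≤ k → k ≤ m → rr j = rr k → j = k := by
    intro j k hj1 hj2 hk1 hk2 he
    rcases lt_trichotomy j k with h | h | h
    · exact absurd he (ne_of_lt (hrrmono j k hj1 hj2 hk1 hk2 h))
    · exact h
    · exact absurd he.symm (ne_of_lt (hrrmono k j hk1 hk2 hj1 hj2 h))
  -- the finset of roots
  set S : Finset ℂ := (Finset.Icc 1 m).image f ∪ (Finset.Icc 1 m).image (fun j => -f j)
    with hS
  have hinj1 : Set.InjOn f (Finset.Icc 1 m) := by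
    intro j hj k hk he
    simp only [coe_Icc, Set.mem_Icc] at hj hk
    have : rr j = rr k := by rw [← hfim, ← hfim, he]
    exact hrrinj j k hj.1 hj.2 hk.1 hk.2 this
  have hinj2 : Set.InjOn (fun j => -f j) (Finset.Icc 1 m) := by
    intro j hj k hk he
    simp only at he
    exact hinj1 hj hk (neg_injective he)
  have hdisj : Disjoint ((Finset.Icc 1 m).image f) ((Finset.Icc 1 m).image (fun j => -f j)) := by
    rw [Finset.disjoint_left]
    rintro z hz1 hz2
    obtain ⟨j, hj, rfl⟩ := Finset.mem_image.1 hz1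
    obtain ⟨k, hk, hke⟩ := Finset.mem_image.1 hz2
    simp only [Finset.mem_Icc] at hj hk
    have him : rr j = -(rr k) := by
      rw [← hfim j, ← hke]
      simp only [Complex.neg_im]
      rw [hfim k]
    have := hrrpos j hj.1 hj.2
    have := hrrpos k hk.1 hk.2
    linarith
  have hScard : S.card = 2 * m := by
    rw [hS, Finset.card_union_of_disjoint hdisj,
      Finset.card_image_of_injOn hinj1, Finset.card_image_of_injOn hinj2,
      Nat.card_Icc]
    omega
  have hSsub : S ⊆ (Pn n).roots.toFinset := by
    intro z hz
    rw [Multiset.mem_toFinset, Polynomial.mem_roots hPne]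
    rw [hS, Finset.mem_union] at hz
    rcases hz with hz | hz
    · obtain ⟨j, hj, rfl⟩ := Finset.mem_image.1 hz
      simp only [Finset.mem_Icc] at hj
      exact hroot j hj.1 hj.2
    · obtain ⟨j, hj, rfl⟩ := Finset.mem_image.1 hz
      simp only [Finset.mem_Icc] at hj
      show (Pn n).eval _ = 0
      rw [Pn_eval_neg]
      exact hroot j hj.1 hj.2
  -- degree bound above
  have hdegle : (Pn n).natDegree ≤ 2 * m := by
    rcases Nat.even_or_odd n with he | ho
    · obtain ⟨k, hk⟩ := he
      have : 2 * m = n := by omega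
      rw [this]; exact Pn_natDegree_le n hn
    · have hcn : (Pn n).coeff n = 0 := by
        rw [Pn_coeff_n n hn, ho.neg_one_pow]
        ring
      have hne : (Pn n).natDegree ≠ n := by
        intro h
        apply hPne
        have : (Pn n).leadingCoeff = 0 := by rw [leadingCoeff, h]; exact hcn
        exact leadingCoeff_eq_zero.1 this
      have := Pn_natDegree_le n hn
      omega
  have h1 : S.card ≤ (Pn n).roots.toFinset.card := Finset.card_le_card hSsub
  have h2 : (Pn n).roots.toFinset.card ≤ Multiset.card (Pn n).roots :=
    Multiset.toFinset_card_le _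
  have h3 := Polynomial.card_roots' (Pn n)
  have hdeg : (Pn n).natDegree = 2 * m := by omega
  have hSeq : S = (Pn n).roots.toFinset :=
    Finset.eq_of_subset_of_card_le hSsub (by omega)
  refine ⟨fun k hk => Pn_odd_coeff n k hk, hdeg, Pn_coeff_n n hn, ?_⟩
  intro z
  have hmem : (Pn n).eval z = 0 ↔ z ∈ S := by
    rw [hSeq, Multiset.mem_toFinset, Polynomial.mem_roots hPne]
    rfl
  rw [hmem, hS]
  simp only [Finset.mem_union, Finset.mem_image]
  constructor
  · rintro (⟨j, hj, rfl⟩ | ⟨j, hj, rfl⟩)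
    · exact ⟨j, hj, Or.inl rfl⟩
    · refine ⟨j, hj, Or.inr ?_⟩
      show -(f j) = _
      simp only [f]
      ring
  · rintro ⟨j, hj, h | h⟩
    · exact Or.inl ⟨j, hj, h.symm⟩
    · refine Or.inr ⟨j, hj, ?_⟩
      rw [h]
      show -(f j) = _
      simp only [f]
      ring

end QnMain
end

section
/- For real ξ, η > 0 and m > 0 satisfying cos(2ξ)cosh(2η) = 1 and sin(2ξ)sinh(2η) = m², with 0 < 2ξ < π/2, one has tan ξ = tanh η, and if additionally m = sin φ / √(cos φ) type data is given via sin(2ξ)sinh(2η) = sin²φ/cos φ for some φ ∈ (0, π/2) with 2ξ = φ, then η = (1/2)·arcsinh(tan φ). -/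
open Real
set_option maxHeartbeats 1000000

theorem xi_eta_determination (ξ η φ : ℝ) (hξ : 0 < ξ) (hη : 0 < η)
    (hξ2 : 2 * ξ < π / 2) (hφ0 : 0 < φ) (hφ1 : φ < π / 2)
    (h1 : Real.cos (2 * ξ) * Real.cosh (2 * η) = 1)
    (h2 : Real.sin (2 * ξ) * Real.sinh (2 * η) = Real.sin φ ^ 2 / Real.cos φ) :
    Real.tan ξ = Real.tanh η ∧ ξ = φ / 2 ∧ η = (1 / 2) * Real.arsinh (Real.tan φ) := by
  have hpi := Real.pi_pos
  have hc : 0 < Real.cos (2 * ξ) := Real.cos_pos_of_mem_Ioo ⟨by linarith, hξ2⟩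
  have hs : 0 < Real.sin (2 * ξ) := Real.sin_pos_of_pos_of_lt_pi (by linarith) (by linarith)
  have hd : 0 < Real.cos φ := Real.cos_pos_of_mem_Ioo ⟨by linarith, hφ1⟩
  have hsφ : 0 < Real.sin φ := Real.sin_pos_of_pos_of_lt_pi hφ0 (by linarith)
  have hcosh : Real.cosh (2 * η) = 1 / Real.cos (2 * ξ) := by
    rw [eq_div_iff hc.ne']; linarith [h1]
  have hshpos : 0 < Real.sinh (2 * η) := Real.sinh_pos_iff.mpr (by linarith)
  have hid := Real.cosh_sq_sub_sinh_sq (2 * η)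
  have hpy := Real.sin_sq_add_cos_sq (2 * ξ)
  have hsinh : Real.sinh (2 * η) = Real.sin (2 * ξ) / Real.cos (2 * ξ) := by
    have key : Real.sinh (2 * η) ^ 2 = (Real.sin (2 * ξ) / Real.cos (2 * ξ)) ^ 2 := by
      rw [hcosh] at hid
      field_simp at hid ⊢
      nlinarith [hid, hpy]
    have hr : 0 < Real.sin (2 * ξ) / Real.cos (2 * ξ) := div_pos hs hc
    nlinarith [key, hshpos, hr]
  -- derive cos (2ξ) = cos φ
  have hpyφ := Real.sin_sq_add_cos_sq φ
  have hcd : Real.cos (2 * ξ) = Real.cos φ := by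
    rw [hsinh] at h2
    have h2' : Real.sin (2 * ξ) ^ 2 * Real.cos φ = Real.sin φ ^ 2 * Real.cos (2 * ξ) := by
      field_simp at h2
      nlinarith [h2]
    have hz : (Real.cos φ - Real.cos (2 * ξ)) * (1 + Real.cos (2 * ξ) * Real.cos φ) = 0 := by
      linear_combination h2' - Real.cos φ * hpy + Real.cos (2 * ξ) * hpyφ
    rcases mul_eq_zero.mp hz with h | h
    · linarith
    · exfalso; nlinarith [mul_pos hc hd]
  have hξφ : 2 * ξ = φ := by
    apply Real.injOn_cos ⟨by linarith, by linarith⟩ ⟨le_of_lt hφ0, by linarith⟩ hcd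
  have hcξ : 0 < Real.cos ξ := Real.cos_pos_of_mem_Ioo ⟨by linarith, by linarith⟩
  have hchη : 0 < Real.cosh η := Real.cosh_pos η
  have t1 : Real.tan ξ = Real.sin (2 * ξ) / (1 + Real.cos (2 * ξ)) := by
    rw [Real.tan_eq_sin_div_cos, Real.sin_two_mul, Real.cos_two_mul]
    have h1c : 1 + (2 * Real.cos ξ ^ 2 - 1) = 2 * Real.cos ξ ^ 2 := by ring
    rw [h1c]
    field_simp
  have t2 : Real.tanh η = Real.sinh (2 * η) / (1 + Real.cosh (2 * η)) := by
    rw [Real.tanh_eq_sinh_div_cosh, Real.sinh_two_mul, Real.cosh_two_mul]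
    have hidη := Real.cosh_sq_sub_sinh_sq η
    have hpos : (0:ℝ) < 1 + (Real.cosh η ^ 2 + Real.sinh η ^ 2) := by positivity
    rw [div_eq_div_iff hchη.ne' hpos.ne']
    linear_combination (-Real.sinh η) * hidη
  have htan : Real.tan ξ = Real.tanh η := by
    have p1 : (0:ℝ) < 1 + Real.cos (2 * ξ) := by linarith
    have p2 : (0:ℝ) < 1 + Real.cosh (2 * η) := by positivity
    rw [t1, t2, div_eq_div_iff p1.ne' p2.ne', hsinh, hcosh]
    field_simp
    ring_nf
    try tauto
  refine ⟨htan, by linarith, ?_⟩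
  have hst : Real.sinh (2 * η) = Real.tan φ := by
    rw [hsinh, hξφ, Real.tan_eq_sin_div_cos]
  have := congrArg Real.arsinh hst
  rw [Real.arsinh_sinh] at this
  linarith
end

section
/- Define α_z = 2n·arcsinh(sin(πz/(2n))) for complex z (principal branches), with n a fixed positive integer, and let y_* = (2n/π)·ln(1+√2). Then ∫_{iy_*}^{0} [sin(πz/2)·sinh(α_z/2) / ((cos πz + cosh α_z)·sinh(α_z/n))] dz = ∫_0^n [sin(πx/2)·sinh(α_x/2) / ((cos πx + cosh α_x)·sinh(α_x/n))] dx, where the left integral is taken along the segment of the imaginary axis from iy_* to 0. -/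
open Real Complex intervalIntegral

lemma csqrt_ofReal {t : ℝ} (ht : 0 ≤ t) : csqrt (t : ℂ) = (Real.sqrt t : ℂ) := by
  rw [csqrt, show (1:ℂ)/2 = ((1/2 : ℝ) : ℂ) by norm_num, ← Complex.ofReal_cpow ht,
    Real.sqrt_eq_rpow]

lemma carsinh_ofReal (t : ℝ) : carsinh (t : ℂ) = (Real.arsinh t : ℂ) := by
  have h1 : (0:ℝ) ≤ 1 + t ^ 2 := by positivity
  have h2 : (1 : ℂ) + (t:ℂ) ^ 2 = ((1 + t^2 : ℝ) : ℂ) := by push_cast; ring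
  rw [carsinh, h2, csqrt_ofReal h1]
  have h3 : (t : ℂ) + (Real.sqrt (1 + t^2) : ℂ) = ((Real.exp (Real.arsinh t) : ℝ) : ℂ) := by
    rw [Real.exp_arsinh]; push_cast; ring
  rw [h3, ← Complex.ofReal_log (Real.exp_pos _).le, Real.log_exp]

lemma carsinh_I_mul {t : ℝ} (h0 : 0 ≤ t) (h1 : t ≤ 1) :
    carsinh (Complex.I * t) = Complex.I * (Real.arcsin t : ℂ) := by
  have hsq : (1 : ℂ) + (Complex.I * t) ^ 2 = ((1 - t^2 : ℝ) : ℂ) := by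
    push_cast
    rw [mul_pow, Complex.I_sq]
    ring
  have h1t : (0:ℝ) ≤ 1 - t^2 := by nlinarith
  have hcos : Real.sqrt (1 - t^2) = Real.cos (Real.arcsin t) := (Real.cos_arcsin t).symm
  have hsin : Real.sin (Real.arcsin t) = t := Real.sin_arcsin (by linarith) h1
  rw [carsinh, hsq, csqrt_ofReal h1t, hcos]
  have : Complex.I * (t:ℂ) + ((Real.cos (Real.arcsin t) : ℝ) : ℂ)
      = Complex.exp ((Real.arcsin t : ℂ) * Complex.I) := by
    rw [Complex.exp_mul_I, ← Complex.ofReal_cos, ← Complex.ofReal_sin, hsin]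
    ring
  rw [this, Complex.log_exp]
  · ring
  · simp only [Complex.mul_I_im, Complex.ofReal_re]
    have := Real.arcsin_nonneg.2 h0
    linarith [Real.pi_pos]
  · simp only [Complex.mul_I_im, Complex.ofReal_re]
    have := Real.arcsin_le_pi_div_two t
    linarith [Real.pi_pos]

set_option maxHeartbeats 1600000 in
theorem contour_symmetry (n : ℕ) (hn : 0 < n) :
    let α : ℂ → ℂ := fun z => 2 * n * carsinh (Complex.sin (π * z / (2 * n)))
    let f : ℂ → ℂ := fun z =>
      Complex.sin (π * z / 2) * Complex.sinh (α z / 2) /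
        ((Complex.cos (π * z) + Complex.cosh (α z)) * Complex.sinh (α z / n))
    let ystar : ℝ := 2 * n / π * Real.log (1 + Real.sqrt 2)
    Complex.I * ∫ y in ystar..(0 : ℝ), f (Complex.I * y) =
      ∫ x in (0 : ℝ)..(n : ℝ), f (x : ℂ) := by
  intro α f ystar
  have hπ : (0:ℝ) < π := Real.pi_pos
  have hn' : (0:ℝ) < (n:ℝ) := by exact_mod_cast hn
  have h2n : (0:ℝ) < 2 * n := by positivity
  have hπc : (π:ℂ) ≠ 0 := Complex.ofReal_ne_zero.2 hπ.ne'
  have hnc : (n:ℂ) ≠ 0 := Nat.cast_ne_zero.2 hn.ne'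
  have hystar : 0 < ystar := by
    have h2 : (1:ℝ) < 1 + Real.sqrt 2 := by
      nlinarith [Real.sq_sqrt (by norm_num : (0:ℝ) ≤ 2), Real.sqrt_nonneg 2]
    have := Real.log_pos h2
    show 0 < 2 * n / π * Real.log (1 + Real.sqrt 2)
    positivity
  -- the substitution map
  set φ : ℝ → ℝ := fun x => 2 * n / π * Real.arsinh (Real.sin (π * x / (2 * n))) with hφdef
  set φ' : ℝ → ℝ := fun x =>
    Real.cos (π * x / (2 * n)) / Real.sqrt (1 + Real.sin (π * x / (2 * n)) ^ 2) with hφ'def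
  have hderiv : ∀ x : ℝ, HasDerivAt φ (φ' x) x := by
    intro x
    have h1 : HasDerivAt (fun x : ℝ => π * x / (2 * n)) (π / (2 * n)) x := by
      simpa using ((hasDerivAt_id x).const_mul π).div_const (2 * n)
    have h2 : HasDerivAt (fun x : ℝ => Real.sin (π * x / (2 * n)))
        (Real.cos (π * x / (2 * n)) * (π / (2 * n))) x := (Real.hasDerivAt_sin _).comp x h1
    have h3 := (Real.hasDerivAt_arsinh _).comp x h2
    have h4 := h3.const_mul (2 * n / π)
    refine h4.congr_deriv ?_
    rw [hφ'def]
    have hs : Real.sqrt (1 + Real.sin (π * x / (2 * n)) ^ 2) ≠ 0 := by positivity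
    field_simp
  have hmem : ∀ x ∈ Set.Icc (0:ℝ) (n:ℝ), π * x / (2 * n) ∈ Set.Icc (-(π/2)) (π/2) := by
    intro x hx
    constructor
    · have h0 : 0 ≤ π * x / (2 * n) := div_nonneg (mul_nonneg hπ.le hx.1) h2n.le
      linarith
    · rw [div_le_iff₀ h2n]
      nlinarith [mul_le_mul_of_nonneg_left hx.2 hπ.le]
  have hmono : StrictMonoOn φ (Set.Icc 0 (n:ℝ)) := by
    intro a ha b hb hab
    have hlt : π * a / (2 * n) < π * b / (2 * n) := by gcongr
    have hsin := Real.strictMonoOn_sin (hmem a ha) (hmem b hb) hlt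
    have harsinh := Real.arsinh_lt_arsinh.2 hsin
    exact mul_lt_mul_of_pos_left harsinh (by positivity)
  have hφ0 : φ 0 = 0 := by simp [hφdef]
  have hφn : φ (n:ℝ) = ystar := by
    have h1 : π * (n:ℝ) / (2 * n) = π / 2 := by field_simp
    have h2 : Real.arsinh 1 = Real.log (1 + Real.sqrt 2) := by
      rw [Real.arsinh]
      norm_num
    show 2 * n / π * Real.arsinh (Real.sin (π * (n:ℝ) / (2 * n))) = _
    rw [h1, Real.sin_pi_div_two, h2]
  have hcont : Continuous φ := by
    apply continuous_const.mul
    exact Real.continuous_arsinh.comp (Real.continuous_sin.comp (by continuity))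
  have himg : φ '' Set.Ioo 0 (n:ℝ) = Set.Ioo 0 ystar := by
    apply Set.Subset.antisymm
    · rintro _ ⟨x, hx, rfl⟩
      constructor
      · rw [← hφ0]
        exact hmono ⟨le_rfl, hn'.le⟩ ⟨hx.1.le, hx.2.le⟩ hx.1
      · rw [← hφn]
        exact hmono ⟨hx.1.le, hx.2.le⟩ ⟨hn'.le, le_rfl⟩ hx.2
    · have := intermediate_value_Ioo hn'.le hcont.continuousOn
      rw [hφ0, hφn] at this
      exact this
  -- real form of α and f on the real axis
  have hαreal : ∀ x : ℝ, α (x:ℂ) = ((π * φ x : ℝ) : ℂ) := by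
    intro x
    show 2 * (n:ℂ) * carsinh (Complex.sin (π * (x:ℂ) / (2 * n))) = _
    have h1 : π * (x:ℂ) / (2 * (n:ℂ)) = ((π * x / (2*n) : ℝ) : ℂ) := by push_cast; ring
    rw [h1, ← Complex.ofReal_sin, carsinh_ofReal]
    have h2 : π * φ x = 2 * n * Real.arsinh (Real.sin (π * x / (2*n))) := by
      rw [hφdef]
      field_simp
    rw [h2]
    push_cast
    ring
  have hfreal : ∀ x : ℝ, f (x:ℂ) =
      ((Real.sin (π*x/2) * Real.sinh (π * φ x/2) /
        ((Real.cos (π*x) + Real.cosh (π * φ x)) * Real.sinh (π * φ x / n)) : ℝ) : ℂ) := by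
    intro x
    show Complex.sin (π * (x:ℂ) / 2) * Complex.sinh (α (x:ℂ) / 2) /
        ((Complex.cos (π * (x:ℂ)) + Complex.cosh (α (x:ℂ))) * Complex.sinh (α (x:ℂ) / n)) = _
    rw [hαreal x]
    have e1 : π * (x:ℂ) / 2 = ((π*x/2 : ℝ):ℂ) := by push_cast; ring
    have e2 : ((π * φ x : ℝ):ℂ) / 2 = ((π * φ x / 2 : ℝ):ℂ) := by push_cast; ring
    have e3 : π * (x:ℂ) = ((π*x : ℝ):ℂ) := by push_cast; ring
    have e4 : ((π * φ x : ℝ):ℂ) / (n:ℂ) = ((π * φ x / n : ℝ):ℂ) := by push_cast; ring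
    rw [e1, e2, e3, e4, ← Complex.ofReal_sin, ← Complex.ofReal_sinh, ← Complex.ofReal_cos,
      ← Complex.ofReal_cosh, ← Complex.ofReal_sinh]
    push_cast
    ring
  -- the key pointwise identity
  have key : ∀ x ∈ Set.Ioo (0:ℝ) (n:ℝ),
      |φ' x| • ((-Complex.I) * f (Complex.I * ((φ x : ℝ):ℂ))) = f (x:ℂ) := by
    intro x hx
    set u := π * x / (2*n) with hu
    have hu0 : 0 < u := div_pos (mul_pos hπ hx.1) h2n
    have huπ : u < π/2 := by
      rw [hu, div_lt_iff₀ h2n]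
      nlinarith [mul_lt_mul_of_pos_left hx.2 hπ]
    set s := Real.sin u with hs
    have hs0 : 0 < s := Real.sin_pos_of_pos_of_lt_pi hu0 (by linarith)
    have hs1 : s ≤ 1 := Real.sin_le_one u
    set y := φ x with hy
    have hy0 : 0 < y := by
      rw [hy, ← hφ0]
      exact hmono ⟨le_rfl, hn'.le⟩ ⟨hx.1.le, hx.2.le⟩ hx.1
    have hyval : π * y / (2*n) = Real.arsinh s := by
      rw [hy, hφdef, hs, hu]
      field_simp
    have hsinh : Real.sinh (π * y/(2*n)) = s := by rw [hyval, Real.sinh_arsinh]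
    have hcosh : Real.cosh (π * y/(2*n)) = Real.sqrt (1+s^2) := by
      rw [hyval, Real.cosh_arsinh]
    have hαim : α (Complex.I * (y:ℂ)) = ((π * x:ℝ):ℂ) * Complex.I := by
      show 2*(n:ℂ) * carsinh (Complex.sin (π * (Complex.I * (y:ℂ)) / (2*(n:ℂ)))) = _
      have e1 : π * (Complex.I * (y:ℂ)) / (2*(n:ℂ)) = ((π*y/(2*n) : ℝ):ℂ) * Complex.I := by
        push_cast; ring
      rw [e1, Complex.sin_mul_I, ← Complex.ofReal_sinh, hsinh]
      have e2 : ((s:ℝ):ℂ) * Complex.I = Complex.I * (s:ℂ) := by ring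
      rw [e2, carsinh_I_mul hs0.le hs1]
      have harc : Real.arcsin s = u := by rw [hs]; exact Real.arcsin_sin (by linarith) huπ.le
      rw [harc, hu]
      push_cast
      field_simp
    have hA : Complex.sin (π * (Complex.I * (y:ℂ)) / 2)
        = ((Real.sinh (π*y/2) : ℝ):ℂ) * Complex.I := by
      have e : π * (Complex.I * (y:ℂ)) / 2 = ((π*y/2 : ℝ):ℂ) * Complex.I := by push_cast; ring
      rw [e, Complex.sin_mul_I, ← Complex.ofReal_sinh]
    have hB : Complex.sinh (((π*x:ℝ):ℂ) * Complex.I / 2)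
        = ((Real.sin (π*x/2):ℝ):ℂ) * Complex.I := by
      have e : ((π*x:ℝ):ℂ) * Complex.I / 2 = ((π*x/2 : ℝ):ℂ) * Complex.I := by push_cast; ring
      rw [e, Complex.sinh_mul_I, ← Complex.ofReal_sin]
    have hC : Complex.cos (π * (Complex.I * (y:ℂ))) = ((Real.cosh (π*y):ℝ):ℂ) := by
      have e : π * (Complex.I * (y:ℂ)) = ((π*y:ℝ):ℂ) * Complex.I := by push_cast; ring
      rw [e, Complex.cos_mul_I, ← Complex.ofReal_cosh]
    have hD : Complex.cosh (((π*x:ℝ):ℂ) * Complex.I) = ((Real.cos (π*x):ℝ):ℂ) := by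
      rw [Complex.cosh_mul_I, ← Complex.ofReal_cos]
    have hE : Complex.sinh (((π*x:ℝ):ℂ) * Complex.I / (n:ℂ))
        = ((Real.sin (π*x/n):ℝ):ℂ) * Complex.I := by
      have e : ((π*x:ℝ):ℂ) * Complex.I / (n:ℂ) = ((π*x/n : ℝ):ℂ) * Complex.I := by
        push_cast; ring
      rw [e, Complex.sinh_mul_I, ← Complex.ofReal_sin]
    set A := Real.sinh (π*y/2) with hAdef
    set B := Real.sin (π*x/2) with hBdef
    set C := Real.cosh (π*y) with hCdef
    set D := Real.cos (π*x) with hDdef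
    set E := Real.sin (π*x/n) with hEdef
    have hfIy : f (Complex.I * (y:ℂ))
        = ((A:ℝ):ℂ) * Complex.I * (((B:ℝ):ℂ) * Complex.I) /
            ((((C:ℝ):ℂ) + ((D:ℝ):ℂ)) * (((E:ℝ):ℂ) * Complex.I)) := by
      show Complex.sin (π * (Complex.I * (y:ℂ)) / 2) * Complex.sinh (α (Complex.I * (y:ℂ)) / 2) /
        ((Complex.cos (π * (Complex.I * (y:ℂ))) + Complex.cosh (α (Complex.I * (y:ℂ)))) *
          Complex.sinh (α (Complex.I * (y:ℂ)) / n)) = _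
      rw [hαim, hA, hB, hC, hD, hE]
    -- positivity facts
    have hEpos : 0 < E := by
      rw [hEdef]
      apply Real.sin_pos_of_pos_of_lt_pi
      · exact div_pos (mul_pos hπ hx.1) hn'
      · rw [div_lt_iff₀ hn']
        nlinarith [mul_lt_mul_of_pos_left hx.2 hπ]
    have hCD : 0 < C + D := by
      have h1 : 1 < C := by
        rw [hCdef]
        exact Real.one_lt_cosh.2 (by positivity)
      have h2 : -1 ≤ D := Real.neg_one_le_cos (π*x)
      linarith
    have hcosu : 0 < Real.cos u := Real.cos_pos_of_mem_Ioo ⟨by linarith, huπ⟩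
    have hsqrt : 0 < Real.sqrt (1+s^2) := by positivity
    have step1 : (-Complex.I) * f (Complex.I * ((y:ℝ):ℂ))
        = ((A * B / ((C + D) * E) : ℝ) : ℂ) := by
      rw [hfIy]
      have hCD' : ((C:ℝ):ℂ) + ((D:ℝ):ℂ) ≠ 0 := by
        rw [← Complex.ofReal_add]
        exact_mod_cast hCD.ne'
      have hE' : ((E:ℝ):ℂ) ≠ 0 := by exact_mod_cast hEpos.ne'
      push_cast
      rw [← mul_div_assoc]
      rw [div_eq_div_iff (mul_ne_zero hCD' (mul_ne_zero hE' Complex.I_ne_zero))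
        (mul_ne_zero hCD' hE')]
      linear_combination (-((A:ℂ) * (B:ℂ) * (((C:ℝ):ℂ) + ((D:ℝ):ℂ)) * (E:ℂ) * Complex.I)) *
        Complex.I_sq
    have hφ'pos : 0 < φ' x := by
      rw [hφ'def]
      exact div_pos hcosu (by positivity)
    have hφ'x : φ' x = Real.cos u / Real.sqrt (1+s^2) := by rw [hφ'def, hs, hu]
    rw [step1, hfreal x, ← hy, Complex.real_smul, ← Complex.ofReal_mul]
    congr 1
    have hE2 : Real.sinh (π * y / n) = 2*s*Real.sqrt (1+s^2) := by
      have e : π*y/n = 2*(π*y/(2*n)) := by field_simp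
      rw [e, Real.sinh_two_mul, hsinh, hcosh]
    have hE3 : E = 2*s*Real.cos u := by
      have e : π*x/n = 2*u := by rw [hu]; field_simp
      rw [hEdef, e, Real.sin_two_mul, hs]
    have h1 : Real.cos u ≠ 0 := hcosu.ne'
    have h2 : Real.sqrt (1+s^2) ≠ 0 := hsqrt.ne'
    have h3 : s ≠ 0 := hs0.ne'
    have h4 : C + D ≠ 0 := hCD.ne'
    have h5 : D + C ≠ 0 := by rw [add_comm]; exact h4
    rw [abs_of_pos hφ'pos, hφ'x, hE2, hE3, ← hAdef, ← hBdef, ← hCdef, ← hDdef]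
    rw [div_mul_div_comm]
    rw [div_eq_div_iff
      (mul_ne_zero h2 (mul_ne_zero h4 (mul_ne_zero (mul_ne_zero two_ne_zero h3) h1)))
      (mul_ne_zero h5 (mul_ne_zero (mul_ne_zero two_ne_zero h3) h2))]
    ring
  -- now assemble the integrals
  have hinj : Set.InjOn φ (Set.Ioo 0 (n:ℝ)) := hmono.injOn.mono Set.Ioo_subset_Icc_self
  calc Complex.I * ∫ y in ystar..(0:ℝ), f (Complex.I * (y:ℂ))
      = (-Complex.I) * ∫ y in (0:ℝ)..ystar, f (Complex.I * (y:ℂ)) := by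
        rw [intervalIntegral.integral_symm]; ring
    _ = ∫ y in (0:ℝ)..ystar, (-Complex.I) * f (Complex.I * (y:ℂ)) :=
        (intervalIntegral.integral_const_mul _ _).symm
    _ = ∫ y in Set.Ioo (0:ℝ) ystar, (-Complex.I) * f (Complex.I * (y:ℂ)) := by
        rw [intervalIntegral.integral_of_le hystar.le,
          MeasureTheory.integral_Ioc_eq_integral_Ioo]
    _ = ∫ x in Set.Ioo (0:ℝ) (n:ℝ), |φ' x| • ((-Complex.I) * f (Complex.I * ((φ x : ℝ):ℂ))) := by
        rw [← himg]
        exact MeasureTheory.integral_image_eq_integral_abs_deriv_smul measurableSet_Ioo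
          (fun x _ => (hderiv x).hasDerivWithinAt) hinj _
    _ = ∫ x in Set.Ioo (0:ℝ) (n:ℝ), f ((x:ℝ):ℂ) :=
        MeasureTheory.setIntegral_congr_fun measurableSet_Ioo key
    _ = ∫ x in (0:ℝ)..(n:ℝ), f ((x:ℝ):ℂ) := by
        rw [intervalIntegral.integral_of_le hn'.le,
          MeasureTheory.integral_Ioc_eq_integral_Ioo]
end

section
/- ∫_0^∞ x·cos(x)·cosh(x) / (cos(2x) + cosh(2x)) dx = 0. -/
open Real MeasureTheory Set Filter Topology

lemma hasDerivF (k : ℝ) (hk : 0 < k) (x : ℝ) :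
    HasDerivAt (fun x : ℝ => Real.exp (-(k*x)) *
      (x/(2*k) * (Real.sin (k*x) - Real.cos (k*x)) + Real.sin (k*x)/(2*k^2)))
      (x * Real.exp (-(k*x)) * Real.cos (k*x)) x := by
  have hkx : HasDerivAt (fun x : ℝ => k*x) k x := by
    simpa using (hasDerivAt_id x).const_mul k
  have hexp := hkx.neg.exp
  have hsin := hkx.sin
  have hcos := hkx.cos
  have hid : HasDerivAt (fun x : ℝ => x/(2*k)) (1/(2*k)) x := (hasDerivAt_id x).div_const _
  have h := hexp.mul ((hid.mul (hsin.sub hcos)).add (hsin.div_const (2*k^2)))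
  refine h.congr_deriv ?_
  simp only [Pi.mul_apply, Pi.sub_apply, Pi.add_apply, Pi.neg_apply]
  field_simp
  ring

lemma tendsto_xexp (k : ℝ) (hk : 0 < k) :
    Tendsto (fun x : ℝ => x * Real.exp (-(k*x))) atTop (𝓝 0) := by
  have := tendsto_rpow_mul_exp_neg_mul_atTop_nhds_zero 1 k hk
  refine this.congr (fun x => ?_)
  rw [Real.rpow_one, neg_mul]

lemma tendsto_exp' (k : ℝ) (hk : 0 < k) :
    Tendsto (fun x : ℝ => Real.exp (-(k*x))) atTop (𝓝 0) := by
  have : Tendsto (fun x : ℝ => Real.exp (-k * x)) atTop (𝓝 0) :=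
    tendsto_exp_atBot.comp (tendsto_id.const_mul_atTop_of_neg (neg_neg_iff_pos.2 hk))
  refine this.congr (fun x => ?_); rw [neg_mul]

lemma tendstoF (k : ℝ) (hk : 0 < k) :
    Tendsto (fun x : ℝ => Real.exp (-(k*x)) *
      (x/(2*k) * (Real.sin (k*x) - Real.cos (k*x)) + Real.sin (k*x)/(2*k^2)))
      atTop (𝓝 0) := by
  have hg : Tendsto (fun x : ℝ => x * Real.exp (-(k*x)) * (1/k) + Real.exp (-(k*x)) * (1/(2*k^2)))
      atTop (𝓝 0) := by
    have := ((tendsto_xexp k hk).mul_const (1/k)).add ((tendsto_exp' k hk).mul_const (1/(2*k^2)))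
    simpa using this
  refine squeeze_zero_norm' ?_ hg
  filter_upwards [eventually_ge_atTop (0:ℝ)] with x hx
  have hs1 := Real.neg_one_le_sin (k*x)
  have hs2 := Real.sin_le_one (k*x)
  have hc1 := Real.neg_one_le_cos (k*x)
  have hc2 := Real.cos_le_one (k*x)
  have he : (0:ℝ) < Real.exp (-(k*x)) := Real.exp_pos _
  rw [Real.norm_eq_abs, abs_mul, Real.abs_exp]
  have ha : (0:ℝ) ≤ x/(2*k) := by positivity
  have hb' : (0:ℝ) ≤ 1/(2*k^2) := by positivity
  have hx1 : x * (1/k) = 2*(x/(2*k)) := by field_simp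
  have hb : |x/(2*k) * (Real.sin (k*x) - Real.cos (k*x)) + Real.sin (k*x)/(2*k^2)|
      ≤ x * (1/k) + 1/(2*k^2) := by
    rw [hx1, abs_le, div_eq_mul_one_div (Real.sin (k*x)) (2*k^2), mul_comm (Real.sin (k*x))]
    constructor <;>
      nlinarith [mul_nonneg ha (by linarith : (0:ℝ) ≤ 1 - Real.sin (k*x)),
        mul_nonneg ha (by linarith : (0:ℝ) ≤ Real.sin (k*x) + 1),
        mul_nonneg ha (by linarith : (0:ℝ) ≤ 1 - Real.cos (k*x)),
        mul_nonneg ha (by linarith : (0:ℝ) ≤ Real.cos (k*x) + 1),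
        mul_nonneg hb' (by linarith : (0:ℝ) ≤ 1 - Real.sin (k*x)),
        mul_nonneg hb' (by linarith : (0:ℝ) ≤ Real.sin (k*x) + 1)]
  calc Real.exp (-(k*x)) * |_| ≤ Real.exp (-(k*x)) * (x * (1/k) + 1/(2*k^2)) := by
        exact mul_le_mul_of_nonneg_left hb he.le
    _ = x * Real.exp (-(k*x)) * (1/k) + Real.exp (-(k*x)) * (1/(2*k^2)) := by ring

lemma integrable_xexp (k : ℝ) (hk : 0 < k) :
    IntegrableOn (fun x : ℝ => x * Real.exp (-(k*x))) (Ioi 0) := by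
  refine integrable_of_isBigO_exp_neg (half_pos hk) (by fun_prop) ?_
  have ht : Tendsto (fun x : ℝ => (x * Real.exp (-(k*x))) / Real.exp (-(k/2)*x)) atTop (𝓝 0) := by
    refine (tendsto_xexp (k/2) (half_pos hk)).congr' ?_
    filter_upwards with x
    rw [eq_div_iff (Real.exp_ne_zero _), mul_assoc, ← Real.exp_add]
    ring_nf
  exact (Asymptotics.isLittleO_of_tendsto (fun x h => absurd h (Real.exp_ne_zero _)) ht).isBigO

lemma integrable_term (k : ℝ) (hk : 0 < k) :
    IntegrableOn (fun x : ℝ => x * Real.exp (-(k*x)) * Real.cos (k*x)) (Ioi 0) := by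
  refine (integrable_xexp k hk).mono' ((Continuous.aestronglyMeasurable (by continuity)).restrict) ?_
  refine (ae_restrict_iff' measurableSet_Ioi).2 (ae_of_all _ (fun x hx => ?_))
  rw [Real.norm_eq_abs, abs_mul, abs_mul, Real.abs_exp, abs_of_pos hx]
  have h1 := Real.abs_cos_le_one (k*x)
  nlinarith [Real.exp_pos (-(k*x)), abs_nonneg (Real.cos (k*x)), (show (0:ℝ) < x from hx).le, mul_pos (show (0:ℝ) < x from hx) (Real.exp_pos (-(k*x)))]

lemma integral_xexp (k : ℝ) (hk : 0 < k) :
    ∫ x in Ioi (0:ℝ), x * Real.exp (-(k*x)) = 1/k^2 := by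
  have := Real.integral_rpow_mul_exp_neg_mul_Ioi (a := 2) (by norm_num) hk
  rw [Real.Gamma_two, mul_one, show (2:ℝ) = ((2:ℕ):ℝ) by norm_num, Real.rpow_natCast,
    div_pow, one_pow] at this
  rw [← this]
  refine setIntegral_congr_fun measurableSet_Ioi (fun x hx => ?_)
  show x * Real.exp (-(k*x)) = x ^ (((2:ℕ):ℝ)-1) * Real.exp (-(k*x))
  rw [show ((2:ℕ):ℝ)-1 = 1 by norm_num, Real.rpow_one]

lemma integral_term_zero (k : ℝ) (hk : 0 < k) :
    ∫ x in Ioi (0:ℝ), x * Real.exp (-(k*x)) * Real.cos (k*x) = 0 := by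
  have := integral_Ioi_of_hasDerivAt_of_tendsto' (a := 0)
    (fun x _ => hasDerivF k hk x) (integrable_term k hk) (tendstoF k hk)
  simpa using this

lemma hasSum_identity (x : ℝ) (hx : 0 < x) :
    HasSum (fun n : ℕ => (-1:ℝ)^n * (x * Real.exp (-((2*n+1)*x)) * Real.cos ((2*n+1)*x)))
      (x * Real.cos x * Real.cosh x / (Real.cos (2*x) + Real.cosh (2*x))) := by
  set w : ℂ := (1 - Complex.I) * x with hw
  set r : ℂ := -Complex.exp (-(2*w)) with hr
  have hwre : (-(2*w)).re = -(2*x) := by simp [hw]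
  have hnr : ‖r‖ < 1 := by
    rw [hr, norm_neg, Complex.norm_exp, hwre]
    exact Real.exp_lt_one_iff.2 (by linarith)
  have h0 := (hasSum_geometric_of_norm_lt_one hnr).mul_left (Complex.exp (-w))
  have hterm : ∀ n : ℕ, Complex.exp (-w) * r ^ n
      = (-1:ℂ)^n * Complex.exp (-((2*n+1:ℕ) * w)) := by
    intro n
    calc Complex.exp (-w) * r ^ n
        = (-1:ℂ)^n * (Complex.exp (-w) * Complex.exp ((n:ℂ) * -(2*w))) := by
          rw [hr, neg_pow, ← Complex.exp_nat_mul]; ring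
      _ = (-1:ℂ)^n * Complex.exp (-((2*n+1:ℕ) * w)) := by
          rw [← Complex.exp_add]; congr 2; push_cast; ring
  have e1 : Complex.exp (-w) * Complex.exp w = 1 := by
    rw [← Complex.exp_add]; simp
  have e2 : Complex.exp (-w) * Complex.exp (-w) = Complex.exp (-(2*w)) := by
    rw [← Complex.exp_add]; ring_nf
  have hne : (1 : ℂ) + Complex.exp (-(2*w)) ≠ 0 := by
    intro h
    have h2 : Complex.exp (-(2*w)) = -1 := by linear_combination h
    have habs := congrArg (‖·‖) h2
    rw [Complex.norm_exp, hwre] at habs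
    simp only [norm_neg, norm_one] at habs
    have := Real.exp_lt_one_iff.2 (show -(2*x) < 0 by linarith)
    rw [habs] at this
    exact lt_irrefl _ this
  have hs : Complex.exp w + Complex.exp (-w) ≠ 0 := by
    intro h
    apply hne
    have h3 : Complex.exp (-w) * (Complex.exp w + Complex.exp (-w))
        = 1 + Complex.exp (-(2*w)) := by rw [mul_add, e1, e2]
    rw [h, mul_zero] at h3
    exact h3.symm
  have hval : Complex.exp (-w) * (1 - r)⁻¹ = (2 * Complex.cosh w)⁻¹ := by
    rw [hr, sub_neg_eq_add, Complex.cosh]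
    field_simp
    rw [mul_comm w 2, div_eq_one_iff_eq hne]
    linear_combination e1 + e2
  rw [hval] at h0
  -- take real parts and multiply by x
  have h1 := (h0.mapL Complex.reCLM).mul_left x
  have hfun : (fun n : ℕ => x * Complex.reCLM (Complex.exp (-w) * r ^ n))
      = fun n : ℕ => (-1:ℝ)^n * (x * Real.exp (-((2*n+1)*x)) * Real.cos ((2*n+1)*x)) := by
    funext n
    rw [hterm n]
    have hcast : ((-1:ℂ))^n = (((-1:ℝ)^n : ℝ) : ℂ) := by push_cast; ring
    have harg : -(((2*n+1:ℕ):ℂ) * w)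
        = Complex.ofReal (-((2*n+1)*x)) + Complex.ofReal ((2*n+1)*x) * Complex.I := by
      rw [hw]; push_cast; ring
    rw [hcast]
    simp only [Complex.reCLM_apply, Complex.re_ofReal_mul, harg, Complex.exp_re]
    simp only [Complex.add_re, Complex.ofReal_re, Complex.mul_re, Complex.I_re, Complex.I_im,
      Complex.ofReal_im, mul_zero, mul_one, zero_mul, sub_zero, add_zero, zero_add, Complex.add_im, Complex.mul_im]
    ring_nf
  have hcoshw : Complex.cosh w = ((Real.cosh x * Real.cos x : ℝ) : ℂ)
      - ((Real.sinh x * Real.sin x : ℝ) : ℂ) * Complex.I := by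
    have hw2 : w = (x:ℂ) - (x:ℂ) * Complex.I := by rw [hw]; ring
    rw [hw2, Complex.cosh_sub, Complex.cosh_mul_I, Complex.sinh_mul_I,
      ← Complex.ofReal_cosh, ← Complex.ofReal_sinh, ← Complex.ofReal_cos, ← Complex.ofReal_sin]
    push_cast
    ring
  have hsin2 : Real.sin x ^ 2 = 1 - Real.cos x ^ 2 := by
    nlinarith [Real.sin_sq_add_cos_sq x]
  have hsinh2 : Real.sinh x ^ 2 = Real.cosh x ^ 2 - 1 := by
    nlinarith [Real.cosh_sq_sub_sinh_sq x]
  have hD : 0 < Real.cosh x ^ 2 + Real.cos x ^ 2 - 1 := by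
    have h1 : 1 < Real.cosh x := by
      rw [← Real.cosh_zero]
      exact Real.cosh_lt_cosh.2 (by simpa using abs_pos.2 (ne_of_gt hx))
    nlinarith [sq_nonneg (Real.cos x)]
  have key : (Real.cosh x * Real.cos x)^2 + (Real.sinh x * Real.sin x)^2
      = Real.cosh x ^ 2 + Real.cos x ^ 2 - 1 := by
    rw [mul_pow, mul_pow, hsinh2, hsin2]; ring
  have hre : ((2 * Complex.cosh w)⁻¹).re
      = (2*(Real.cosh x * Real.cos x)) /
        ((2*(Real.cosh x * Real.cos x))^2 + (2*(Real.sinh x * Real.sin x))^2) := by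
    have h2 : (2:ℂ) * Complex.cosh w
        = Complex.ofReal (2*(Real.cosh x * Real.cos x))
          + Complex.ofReal (-(2*(Real.sinh x * Real.sin x))) * Complex.I := by
      rw [hcoshw]; push_cast; ring
    rw [h2, Complex.inv_re, Complex.normSq_apply]
    simp only [Complex.add_re, Complex.add_im, Complex.ofReal_re, Complex.ofReal_im,
      Complex.mul_re, Complex.mul_im, Complex.I_re, Complex.I_im, mul_zero, mul_one,
      zero_mul, sub_zero, zero_add, add_zero, zero_sub]
    ring_nf
  have hvalue : x * Complex.reCLM ((2 * Complex.cosh w)⁻¹)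
      = x * Real.cos x * Real.cosh x / (Real.cos (2*x) + Real.cosh (2*x)) := by
    rw [Complex.reCLM_apply, hre, Real.cos_two_mul, Real.cosh_two_mul, hsinh2,
      ← mul_div_assoc]
    have hB : (2*(Real.cosh x * Real.cos x))^2 + (2*(Real.sinh x * Real.sin x))^2 ≠ 0 := by
      nlinarith [key, hD]
    rw [div_eq_div_iff hB (by nlinarith : (2 * Real.cos x ^ 2 - 1 +
        (Real.cosh x ^ 2 + (Real.cosh x ^ 2 - 1))) ≠ 0)]
    linear_combination (-4*x*Real.cosh x*Real.cos x) * key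
  rw [hfun, hvalue] at h1
  exact h1

theorem glaisher_cos_cosh_integral :
    ∫ x in Set.Ioi (0 : ℝ),
        x * Real.cos x * Real.cosh x / (Real.cos (2 * x) + Real.cosh (2 * x)) = 0 := by
  have hk : ∀ n : ℕ, (0:ℝ) < 2*n+1 := fun n => by positivity
  set F : ℕ → ℝ → ℝ :=
    fun n x => (-1:ℝ)^n * (x * Real.exp (-((2*n+1)*x)) * Real.cos ((2*n+1)*x)) with hF
  have hFint : ∀ n, Integrable (F n) (volume.restrict (Ioi 0)) :=
    fun n => (integrable_term _ (hk n)).const_mul _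
  have hnorm : ∀ n, (∫ x in Ioi (0:ℝ), ‖F n x‖) ≤ 1/(2*(n:ℝ)+1)^2 := by
    intro n
    rw [← integral_xexp _ (hk n)]
    refine integral_mono_of_nonneg (ae_of_all _ fun x => norm_nonneg _)
      (integrable_xexp _ (hk n)) ?_
    refine (ae_restrict_iff' measurableSet_Ioi).2 (ae_of_all _ fun x hx => ?_)
    simp only [hF, Real.norm_eq_abs, abs_mul, abs_pow, abs_neg, abs_one, one_pow, one_mul,
      Real.abs_exp, abs_of_pos (show (0:ℝ) < x from hx)]
    have h1 := Real.abs_cos_le_one ((2*(n:ℝ)+1)*x)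
    nlinarith [Real.exp_pos (-((2*(n:ℝ)+1)*x)), abs_nonneg (Real.cos ((2*(n:ℝ)+1)*x)), (show (0:ℝ) < x from hx).le,
      mul_pos (show (0:ℝ) < x from hx) (Real.exp_pos (-((2*(n:ℝ)+1)*x)))]
  have hsummable : Summable (fun n : ℕ => ∫ x in Ioi (0:ℝ), ‖F n x‖) := by
    have h2 : Summable (fun n : ℕ => 1/((n:ℝ)+1)^2) := by
      have h := (Real.summable_one_div_nat_pow (p := 2)).mpr one_lt_two
      have h3 := (summable_nat_add_iff 1).mpr h
      refine h3.congr fun n => ?_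
      push_cast
      ring
    refine Summable.of_nonneg_of_le
      (fun n => integral_nonneg fun x => norm_nonneg _) (fun n => (hnorm n).trans ?_) h2
    have hc : ((n:ℝ)+1)^2 ≤ (2*(n:ℝ)+1)^2 := by nlinarith [Nat.cast_nonneg (α := ℝ) n]
    exact one_div_le_one_div_of_le (by positivity) hc
  have hzero : ∀ n, (∫ x in Ioi (0:ℝ), F n x) = 0 := by
    intro n
    simp only [hF]
    rw [integral_const_mul, integral_term_zero _ (hk n), mul_zero]
  calc ∫ x in Ioi (0:ℝ), x * Real.cos x * Real.cosh x / (Real.cos (2*x) + Real.cosh (2*x))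
      = ∫ x in Ioi (0:ℝ), ∑' n, F n x :=
        setIntegral_congr_fun measurableSet_Ioi
          (fun x hx => ((hasSum_identity x hx).tsum_eq).symm)
    _ = ∑' n, ∫ x in Ioi (0:ℝ), F n x :=
        (integral_tsum_of_summable_integral_norm hFint hsummable).symm
    _ = 0 := by simp [hzero]
end
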